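/- arXiv:1803.02466 — 9 statements merged into one kernel-verified Lean document; each statement's English description precedes it below -/
import Mathlib

section
/- Fix real numbers ε, Δ, δz with 0 < ε ≤ 1/5, 0 < Δ ≤ π, 0 < δz ≤ Δ/√(2·log(20/ε)), and an integer L ≥ 2 with (L−1)·δz ≥ √(2·log(20/ε)). Then for every real λ with Δ ≤ λ ≤ 2π − Δ, |(δz/√(2π)) · ∑_{l=−L}^{L−1} exp(−(l·δz)²/2) · exp(i·l·λ)| ≤ ε. -/
open Real Complex

lemma summable_gauss_int (A B : ℝ) (hA : 0 < A) :
    Summable (fun n : ℤ => Real.exp (-A * n ^ 2 + B * n)) := by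
  have hπ := Real.pi_pos
  set τ : ℂ := Complex.I * ((A / Real.pi : ℝ) : ℂ) with hτ
  set z : ℂ := Complex.I * ((-B / (2 * Real.pi) : ℝ) : ℂ) with hz
  have hτim : τ.im = A / Real.pi := by simp [hτ]
  have hzim : z.im = -B / (2 * Real.pi) := by
    rw [hz, Complex.mul_im, Complex.I_re, Complex.I_im, Complex.ofReal_re, Complex.ofReal_im]
    ring
  have hsum : Summable fun n : ℤ => jacobiTheta₂_term n z τ :=
    (summable_jacobiTheta₂_term_iff z τ).mpr (by rw [hτim]; positivity)
  refine (summable_norm_iff.mpr hsum).congr fun n => ?_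
  rw [norm_jacobiTheta₂_term, hτim, hzim]
  congr 1
  field_simp
  ring

set_option maxHeartbeats 8000000

/-- spectral-gap case of Lemma 1: for `0 < ε ≤ 1/5`, `0 < Δ ≤ π`,
`0 < δz ≤ Δ/√(2 log(20/ε))`, an integer `L ≥ 2` with `(L−1)·δz ≥ √(2 log(20/ε))`,
and any `λ` with `Δ ≤ λ ≤ 2π − Δ`,
`|(δz/√(2π)) ∑_{l=−L}^{L−1} exp(−(l δz)²/2) e^{i l λ}| ≤ ε`. -/
theorem stmt_2 (ε Δ δz lam : ℝ) (L : ℤ)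
    (hε : 0 < ε) (hε' : ε ≤ 1 / 5)
    (hΔ : 0 < Δ) (hΔ' : Δ ≤ Real.pi)
    (hδz : 0 < δz) (hδz' : δz ≤ Δ / Real.sqrt (2 * Real.log (20 / ε)))
    (hL : 2 ≤ L) (hLδz : Real.sqrt (2 * Real.log (20 / ε)) ≤ ((L : ℝ) - 1) * δz)
    (hlam : Δ ≤ lam) (hlam' : lam ≤ 2 * Real.pi - Δ) :
    ‖((δz / Real.sqrt (2 * Real.pi) : ℝ) : ℂ) *
      ∑ l ∈ Finset.Icc (-L) (L - 1),
        (Real.exp (-((l : ℝ) * δz) ^ 2 / 2) : ℂ) *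
          Complex.exp (Complex.I * l * lam)‖ ≤ ε := by
  have hπ := Real.pi_pos
  set g : ℤ → ℂ := fun l => ((Real.exp (-((l : ℝ) * δz) ^ 2 / 2) : ℝ) : ℂ) *
      Complex.exp (Complex.I * l * lam) with hgdef
  -- numerics
  have hε20 : (0:ℝ) < 20 / ε := by positivity
  have h100 : (100:ℝ) ≤ 20 / ε := by rw [le_div_iff₀ hε]; nlinarith
  have hlog : (9:ℝ)/2 ≤ Real.log (20 / ε) := by
    have h1 : Real.exp 1 < 2.7182818286 := Real.exp_one_lt_d9
    have h9 : Real.exp 9 < 10000 := by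
      have h2 : Real.exp 9 = (Real.exp 1) ^ (9:ℕ) := by
        rw [← Real.exp_nat_mul]; norm_num
      have h3 : (Real.exp 1) ^ (9:ℕ) ≤ (2.7182818286:ℝ) ^ (9:ℕ) :=
        pow_le_pow_left₀ (Real.exp_pos 1).le h1.le 9
      have h4 : (2.7182818286:ℝ) ^ (9:ℕ) < 10000 := by norm_num
      linarith [h2 ▸ h3]
    have h92 : Real.exp (9/2) < 100 := by
      nlinarith [Real.exp_pos (9/2), (Real.exp_add (9/2) (9/2)).symm,
        (show (9:ℝ)/2 + 9/2 = 9 by norm_num)]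
    rw [Real.le_log_iff_exp_le hε20]
    linarith
  set s := Real.sqrt (2 * Real.log (20 / ε)) with hsdef
  have hs0 : 0 ≤ s := Real.sqrt_nonneg _
  have hs2 : s ^ 2 = 2 * Real.log (20 / ε) := Real.sq_sqrt (by linarith)
  have hs3 : 3 ≤ s := by nlinarith
  have hsδ : s * δz ≤ Δ := by
    have h := (le_div_iff₀ (show 0 < s by linarith)).mp hδz'
    nlinarith
  have hεc : Real.exp (-s ^ 2 / 2) = ε / 20 := by
    rw [hs2, show -(2 * Real.log (20/ε))/2 = -Real.log (20/ε) by ring, Real.exp_neg,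
      Real.exp_log hε20, inv_div]
  have hsqrt2π : (2:ℝ) ≤ Real.sqrt (2*Real.pi) := by
    nlinarith [Real.sq_sqrt (by positivity : (0:ℝ) ≤ 2*Real.pi),
      Real.sqrt_nonneg (2*Real.pi), Real.pi_gt_three]
  -- summability
  have hnorm_g : ∀ l : ℤ, ‖g l‖ = Real.exp (-((l:ℝ)*δz)^2/2) := by
    intro l
    have h1 : ‖Complex.exp (Complex.I * l * lam)‖ = 1 := by
      rw [Complex.norm_exp]
      have h2 : (Complex.I * (l:ℂ) * (lam:ℂ)).re = 0 := by
        simp [Complex.mul_re, Complex.mul_im]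
      rw [h2, Real.exp_zero]
    rw [hgdef]
    simp only [norm_mul, h1, mul_one, Complex.norm_real, Real.norm_eq_abs]
    exact _root_.abs_of_pos (Real.exp_pos _)
  have hga : Summable (fun l : ℤ => Real.exp (-((l:ℝ)*δz)^2/2)) := by
    refine (summable_gauss_int (δz^2/2) 0 (by positivity)).congr fun l => ?_
    congr 1; push_cast; ring
  have hgn : Summable (fun l : ℤ => ‖g l‖) := hga.congr fun l => (hnorm_g l).symm
  have hg : Summable g := hgn.of_norm
  -- theta transformation
  set T : ℝ := ∑' n : ℤ, Real.exp (-(2*Real.pi*(n:ℝ) - lam)^2/(2*δz^2)) with hTdef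
  have hT0 : 0 ≤ T := tsum_nonneg fun n => (Real.exp_pos _).le
  have key : ((δz / Real.sqrt (2*Real.pi) : ℝ) : ℂ) * ∑' l : ℤ, g l = (T : ℂ) := by
    have hπc : ((Real.pi : ℝ) : ℂ) ≠ 0 := Complex.ofReal_ne_zero.mpr Real.pi_ne_zero
    have hδc : ((δz : ℝ) : ℂ) ≠ 0 := Complex.ofReal_ne_zero.mpr hδz.ne'
    have ha : (0:ℝ) < ((((δz^2/(2*Real.pi) : ℝ)) : ℂ)).re := by
      rw [Complex.ofReal_re]; positivity
    have H := Complex.tsum_exp_neg_quadratic (a := (((δz^2/(2*Real.pi) : ℝ)) : ℂ)) ha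
      ((lam : ℂ) * Complex.I / (2*(Real.pi:ℂ)))
    have hL2 : (∑' n : ℤ, Complex.exp (-(Real.pi:ℂ) * (((δz^2/(2*Real.pi) : ℝ)) : ℂ) * (n:ℂ) ^ 2
        + 2 * (Real.pi:ℂ) * ((lam : ℂ) * Complex.I / (2*(Real.pi:ℂ))) * (n:ℂ)))
        = ∑' l : ℤ, g l := by
      refine tsum_congr fun n => ?_
      show _ = ((Real.exp (-((n : ℝ) * δz) ^ 2 / 2):ℝ):ℂ) * Complex.exp (Complex.I * n * lam)
      rw [Complex.ofReal_exp, ← Complex.exp_add]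
      congr 1
      push_cast
      field_simp
    have hR2 : (∑' n : ℤ, Complex.exp (-(Real.pi:ℂ) / (((δz^2/(2*Real.pi) : ℝ)) : ℂ)
        * ((n:ℂ) + Complex.I * ((lam : ℂ) * Complex.I / (2*(Real.pi:ℂ)))) ^ 2)) = (T : ℂ) := by
      rw [hTdef, Complex.ofReal_tsum]
      refine tsum_congr fun n => ?_
      rw [Complex.ofReal_exp]
      congr 1
      have hI : Complex.I * ((lam : ℂ) * Complex.I / (2*(Real.pi:ℂ)))
          = -(lam:ℂ) / (2*(Real.pi:ℂ)) := by
        rw [show Complex.I * ((lam : ℂ) * Complex.I / (2*(Real.pi:ℂ)))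
          = (Complex.I*Complex.I) * (lam:ℂ) / (2*(Real.pi:ℂ)) by ring, Complex.I_mul_I]
        ring
      rw [hI]
      push_cast
      field_simp
      ring
    have hroot : ((((δz^2/(2*Real.pi) : ℝ)) : ℂ)) ^ (1/2 : ℂ)
        = ((δz / Real.sqrt (2*Real.pi) : ℝ) : ℂ) := by
      rw [show (1/2:ℂ) = (((1/2:ℝ)) : ℂ) by norm_num, ← Complex.ofReal_cpow (by positivity)]
      rw [Complex.ofReal_inj]
      rw [← Real.sqrt_eq_rpow, Real.sqrt_div (sq_nonneg δz), Real.sqrt_sq hδz.le]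
    rw [hL2, hR2, hroot] at H
    have hp : ((δz / Real.sqrt (2*Real.pi) : ℝ) : ℂ) ≠ 0 := by
      refine Complex.ofReal_ne_zero.mpr ?_
      positivity
    rw [H, show (((δz / Real.sqrt (2*Real.pi) : ℝ)) : ℂ) * (1/(((δz / Real.sqrt (2*Real.pi) : ℝ)) : ℂ) * (T:ℂ))
      = ((((δz / Real.sqrt (2*Real.pi) : ℝ)) : ℂ)/(((δz / Real.sqrt (2*Real.pi) : ℝ)) : ℂ)) * (T:ℂ) by ring,
      div_self hp, one_mul]
  -- bound on T
  have hT : T ≤ ε/4 := by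
    have hd2 : (0:ℝ) < 2*δz^2 := by positivity
    set q : ℝ := Real.exp (-(2*Real.pi*Δ/δz^2)) with hqdef
    have hq0 : 0 ≤ q := (Real.exp_pos _).le
    have h3δ : 3*δz ≤ Δ := by nlinarith
    have h18 : (1:ℝ) ≤ 2*Real.pi*Δ/δz^2 := by
      rw [le_div_iff₀ (by positivity)]
      nlinarith
    have hq1 : q < 1 := by
      rw [hqdef, show (1:ℝ) = Real.exp 0 by simp]
      exact Real.exp_lt_exp.mpr (by linarith)
    have hqh : q ≤ 1/2 := by
      have he : (2.7182818283:ℝ) < Real.exp 1 := Real.exp_one_gt_d9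
      have h1 : q ≤ Real.exp (-1) := Real.exp_le_exp.mpr (by linarith)
      rw [Real.exp_neg] at h1
      have h2 : (Real.exp 1)⁻¹ ≤ (2:ℝ)⁻¹ :=
        inv_anti₀ (by norm_num) (by linarith)
      have h3 : ((2:ℝ))⁻¹ = 1/2 := by norm_num
      linarith
    set c' : ℝ := Real.exp (-Δ^2/(2*δz^2)) with hcdef
    have hc'0 : 0 ≤ c' := (Real.exp_pos _).le
    have hc'ε : c' ≤ ε/20 := by
      rw [hcdef, ← hεc]
      apply Real.exp_le_exp.mpr
      rw [div_le_div_iff₀ hd2 two_pos]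
      nlinarith [mul_self_le_mul_self (mul_nonneg hs0 hδz.le) hsδ]
    have hts : Summable (fun n : ℤ => Real.exp (-(2*Real.pi*(n:ℝ) - lam)^2/(2*δz^2))) := by
      refine ((summable_gauss_int (2*Real.pi^2/δz^2) (2*Real.pi*lam/δz^2)
        (by positivity)).mul_left (Real.exp (-lam^2/(2*δz^2)))).congr fun n => ?_
      rw [← Real.exp_add]
      congr 1
      field_simp
      ring
    have h1 : Summable (fun n : ℕ => Real.exp (-(2*Real.pi*((n:ℤ):ℝ) - lam)^2/(2*δz^2))) :=
      hts.comp_injective Nat.cast_injective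
    have h2inj : Function.Injective (fun n : ℕ => (-((n:ℤ)+1) : ℤ)) := by
      intro a b h
      simp only [neg_inj, add_left_inj, Nat.cast_inj] at h
      exact h
    have h2 : Summable (fun n : ℕ =>
        Real.exp (-(2*Real.pi*(((-((n:ℤ)+1)):ℤ):ℝ) - lam)^2/(2*δz^2))) :=
      hts.comp_injective h2inj
    have hgeo : Summable (fun n : ℕ => c' * q^n) :=
      (summable_geometric_of_lt_one hq0 hq1).mul_left _
    have hgeosum : (∑' n : ℕ, c' * q^n) ≤ 2*c' := by
      rw [tsum_mul_left, tsum_geometric_of_lt_one hq0 hq1]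
      have hinv : (1-q)⁻¹ ≤ 2 := by
        rw [show (2:ℝ) = (1/2)⁻¹ by norm_num]
        exact inv_anti₀ (by norm_num) (by linarith)
      nlinarith
    have hqn : ∀ n : ℕ, c' * q^n = Real.exp ((-Δ^2 - (4*Real.pi*Δ)*(n:ℝ))/(2*δz^2)) := by
      intro n
      rw [hcdef, hqdef, ← Real.exp_nat_mul, ← Real.exp_add]
      congr 1
      field_simp
      ring
    have hpos : (∑' n : ℕ, Real.exp (-(2*Real.pi*((n:ℤ):ℝ) - lam)^2/(2*δz^2))) ≤ 3*c' := by
      rw [Summable.tsum_eq_zero_add h1]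
      have hz : Real.exp (-(2*Real.pi*(((0:ℕ):ℤ):ℝ) - lam)^2/(2*δz^2)) ≤ c' := by
        apply Real.exp_le_exp.mpr
        rw [div_le_div_iff₀ hd2 hd2]
        push_cast
        nlinarith [mul_self_le_mul_self hΔ.le hlam, hd2, sq_nonneg δz]
      have hshift : (∑' n : ℕ,
          Real.exp (-(2*Real.pi*(((n+1:ℕ):ℤ):ℝ) - lam)^2/(2*δz^2))) ≤ ∑' n : ℕ, c' * q^n := by
        refine Summable.tsum_le_tsum (fun n => ?_) ((summable_nat_add_iff 1).mpr h1) hgeo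
        rw [hqn n]
        apply Real.exp_le_exp.mpr
        rw [div_le_div_iff₀ hd2 hd2]
        have hn0 : (0:ℝ) ≤ (n:ℝ) := Nat.cast_nonneg n
        have hkey : Δ + 2*Real.pi*(n:ℝ) ≤ 2*Real.pi*((n:ℝ)+1) - lam := by nlinarith
        have hsq : (Δ + 2*Real.pi*(n:ℝ))^2 ≤ (2*Real.pi*((n:ℝ)+1) - lam)^2 :=
          pow_le_pow_left₀ (by positivity) hkey 2
        push_cast
        nlinarith [sq_nonneg (2*Real.pi*(n:ℝ))]
      linarith [hgeosum]
    have hneg : (∑' n : ℕ,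
        Real.exp (-(2*Real.pi*(((-((n:ℤ)+1)):ℤ):ℝ) - lam)^2/(2*δz^2))) ≤ 2*c' := by
      refine le_trans (Summable.tsum_le_tsum (fun n => ?_) h2 hgeo) hgeosum
      rw [hqn n]
      apply Real.exp_le_exp.mpr
      rw [div_le_div_iff₀ hd2 hd2]
      have hn0 : (0:ℝ) ≤ (n:ℝ) := Nat.cast_nonneg n
      have hkey : Δ + 2*Real.pi*(n:ℝ) ≤ 2*Real.pi*((n:ℝ)+1) + lam := by nlinarith
      have hsq : (Δ + 2*Real.pi*(n:ℝ))^2 ≤ (2*Real.pi*((n:ℝ)+1) + lam)^2 :=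
        pow_le_pow_left₀ (by positivity) hkey 2
      push_cast
      nlinarith [sq_nonneg (2*Real.pi*(n:ℝ))]
    have hsplit : T = (∑' n : ℕ, Real.exp (-(2*Real.pi*((n:ℤ):ℝ) - lam)^2/(2*δz^2)))
        + ∑' n : ℕ, Real.exp (-(2*Real.pi*(((-((n:ℤ)+1)):ℤ):ℝ) - lam)^2/(2*δz^2)) := by
      rw [hTdef]
      exact tsum_of_nat_of_neg_add_one h1 h2
    rw [hsplit]
    linarith
  -- tail bound
  have htail : ‖∑' x : ↑((Finset.Icc (-L) (L-1) : Finset ℤ) : Set ℤ)ᶜ, g x‖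
      ≤ 2*(ε/20)/(s*δz) := by
    have hs0' : (0:ℝ) < s := by linarith
    have hsδ0 : (0:ℝ) < s*δz := mul_pos hs0' hδz
    set r : ℝ := Real.exp (-(s*δz)) with hrdef
    have hr0 : 0 ≤ r := (Real.exp_pos _).le
    have hr1 : r < 1 := by
      rw [hrdef, show (1:ℝ) = Real.exp 0 by simp]
      exact Real.exp_lt_exp.mpr (by linarith)
    have hgeo : Summable (fun n : ℕ => (ε/20*r) * r^n) :=
      (summable_geometric_of_lt_one hr0 hr1).mul_left _
    have hgeosum : (∑' n : ℕ, (ε/20*r) * r^n) ≤ (ε/20)/(s*δz) := by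
      rw [tsum_mul_left, tsum_geometric_of_lt_one hr0 hr1]
      have hrr : r * Real.exp (s*δz) = 1 := by rw [hrdef, ← Real.exp_add]; simp
      have h1r : (0:ℝ) < 1 - r := by linarith
      have hcross : r * (s*δz) ≤ 1 - r := by
        nlinarith [Real.add_one_le_exp (s*δz), hrr, hr0]
      have h2 : r * (1-r)⁻¹ ≤ (s*δz)⁻¹ := by
        have h3 := (div_le_div_iff₀ h1r hsδ0).mpr (by nlinarith : r * (s*δz) ≤ 1 * (1-r))
        simpa [div_eq_mul_inv] using h3
      calc (ε/20*r)*(1-r)⁻¹ = (ε/20) * (r * (1-r)⁻¹) := by ring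
        _ ≤ (ε/20) * (s*δz)⁻¹ := mul_le_mul_of_nonneg_left h2 (by positivity)
        _ = (ε/20)/(s*δz) := by ring
    have hsub : Summable (fun x : ↑((Finset.Icc (-L) (L-1) : Finset ℤ) : Set ℤ)ᶜ => ‖g ↑x‖) :=
      hgn.subtype _
    refine le_trans (norm_tsum_le_tsum_norm hsub) ?_
    rw [tsum_subtype (((Finset.Icc (-L) (L-1) : Finset ℤ) : Set ℤ)ᶜ) (fun l => ‖g l‖)]
    set F : ℤ → ℝ :=
      (((Finset.Icc (-L) (L-1) : Finset ℤ) : Set ℤ)ᶜ).indicator (fun l => ‖g l‖) with hFdef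
    have hFs : Summable F := hgn.indicator _
    have hF1 : Summable (fun n : ℕ => F n) := hFs.comp_injective Nat.cast_injective
    have h2inj : Function.Injective (fun n : ℕ => (-((n:ℤ)+1) : ℤ)) := by
      intro a b h
      simp only [neg_inj, add_left_inj, Nat.cast_inj] at h
      exact h
    have hF2 : Summable (fun n : ℕ => F (-((n:ℤ)+1))) := hFs.comp_injective h2inj
    rw [tsum_of_nat_of_neg_add_one hF1 hF2]
    set Lt := L.toNat with hLtdef
    have hLt : (Lt:ℤ) = L := Int.toNat_of_nonneg (by linarith)
    have hLtR : ((Lt:ℕ):ℝ) = (L:ℝ) := by exact_mod_cast hLt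
    -- positive side
    have hzero1 : ∑ i ∈ Finset.range Lt, F ((i:ℕ):ℤ) = 0 := by
      refine Finset.sum_eq_zero fun i hi => ?_
      have hi' := Finset.mem_range.mp hi
      apply Set.indicator_of_notMem
      simp only [Set.notMem_compl_iff, Finset.coe_Icc, Set.mem_Icc]
      omega
    have hshift1 : (∑' n : ℕ, F (((n+Lt:ℕ)):ℤ)) ≤ ∑' n : ℕ, (ε/20*r) * r^n := by
      refine Summable.tsum_le_tsum (fun n => ?_) ((summable_nat_add_iff Lt).mpr hF1) hgeo
      have hmem : (((n+Lt:ℕ)):ℤ) ∈ (((Finset.Icc (-L) (L-1) : Finset ℤ) : Set ℤ))ᶜ := by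
        simp only [Set.mem_compl_iff, Finset.coe_Icc, Set.mem_Icc]
        omega
      rw [hFdef, Set.indicator_of_mem hmem, hnorm_g]
      have hrhs : (ε/20*r)*r^n = Real.exp (-s^2/2 - (s*δz)*((n:ℝ)+1)) := by
        rw [← hεc, hrdef, ← Real.exp_nat_mul, ← Real.exp_add, ← Real.exp_add]
        congr 1
        ring
      rw [hrhs]
      apply Real.exp_le_exp.mpr
      have hcast : (((n+Lt:ℕ):ℤ):ℝ) = (n:ℝ) + (L:ℝ) := by push_cast [hLtR]; ring
      rw [hcast]
      nlinarith [mul_self_le_mul_self hs0 hLδz,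
        mul_le_mul_of_nonneg_right hLδz (by positivity : (0:ℝ) ≤ ((n:ℝ)+1)*δz),
        sq_nonneg (((n:ℝ)+1)*δz)]
    have hpos : (∑' n : ℕ, F ((n:ℕ):ℤ)) ≤ (ε/20)/(s*δz) := by
      rw [← Summable.sum_add_tsum_nat_add Lt hF1, hzero1, zero_add]
      exact le_trans hshift1 hgeosum
    -- negative side
    have hzero2 : ∑ i ∈ Finset.range Lt, F (-((i:ℤ)+1)) = 0 := by
      refine Finset.sum_eq_zero fun i hi => ?_
      have hi' := Finset.mem_range.mp hi
      apply Set.indicator_of_notMem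
      simp only [Set.notMem_compl_iff, Finset.coe_Icc, Set.mem_Icc]
      omega
    have hshift2 : (∑' n : ℕ, F (-(((n+Lt:ℕ):ℤ)+1))) ≤ ∑' n : ℕ, (ε/20*r) * r^n := by
      refine Summable.tsum_le_tsum (fun n => ?_) ((summable_nat_add_iff Lt).mpr hF2) hgeo
      have hmem : (-(((n+Lt:ℕ):ℤ)+1)) ∈ (((Finset.Icc (-L) (L-1) : Finset ℤ) : Set ℤ))ᶜ := by
        simp only [Set.mem_compl_iff, Finset.coe_Icc, Set.mem_Icc]
        omega
      rw [hFdef, Set.indicator_of_mem hmem, hnorm_g]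
      have hrhs : (ε/20*r)*r^n = Real.exp (-s^2/2 - (s*δz)*((n:ℝ)+1)) := by
        rw [← hεc, hrdef, ← Real.exp_nat_mul, ← Real.exp_add, ← Real.exp_add]
        congr 1
        ring
      rw [hrhs]
      apply Real.exp_le_exp.mpr
      have hcast : (((-(((n+Lt:ℕ):ℤ)+1)):ℤ):ℝ) = -((n:ℝ) + (L:ℝ) + 1) := by
        push_cast [hLtR]
        ring
      rw [hcast]
      nlinarith [mul_self_le_mul_self hs0 hLδz,
        mul_le_mul_of_nonneg_right hLδz (by positivity : (0:ℝ) ≤ ((n:ℝ)+2)*δz),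
        sq_nonneg (((n:ℝ)+2)*δz), mul_pos hs0' hδz, Nat.cast_nonneg (α := ℝ) n]
    have hneg : (∑' n : ℕ, F (-((n:ℤ)+1))) ≤ (ε/20)/(s*δz) := by
      rw [← Summable.sum_add_tsum_nat_add Lt hF2, hzero2, zero_add]
      exact le_trans hshift2 hgeosum
    have : 2*(ε/20)/(s*δz) = (ε/20)/(s*δz) + (ε/20)/(s*δz) := by ring
    rw [this]
    exact add_le_add hpos hneg
  -- assemble
  have hcompl := Summable.sum_add_tsum_compl (s := Finset.Icc (-L) (L-1)) hg
  set tail := ∑' x : ↑((Finset.Icc (-L) (L-1) : Finset ℤ) : Set ℤ)ᶜ, g x with htaildef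
  have hsum_eq : ∑ l ∈ Finset.Icc (-L) (L-1), g l = (∑' l : ℤ, g l) - tail := by
    rw [← hcompl]; ring
  rw [hsum_eq, mul_sub]
  calc ‖((δz / Real.sqrt (2*Real.pi) : ℝ) : ℂ) * ∑' l : ℤ, g l -
        ((δz / Real.sqrt (2*Real.pi) : ℝ) : ℂ) * tail‖
      ≤ ‖((δz / Real.sqrt (2*Real.pi) : ℝ) : ℂ) * ∑' l : ℤ, g l‖ +
        ‖((δz / Real.sqrt (2*Real.pi) : ℝ) : ℂ) * tail‖ := norm_sub_le _ _
    _ = T + (δz / Real.sqrt (2*Real.pi)) * ‖tail‖ := by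
        rw [key, norm_mul, Complex.norm_real, Complex.norm_real,
          Real.norm_eq_abs, Real.norm_eq_abs, _root_.abs_of_nonneg hT0,
          _root_.abs_of_nonneg (by positivity : (0:ℝ) ≤ δz / Real.sqrt (2*Real.pi))]
    _ ≤ ε/4 + (δz / Real.sqrt (2*Real.pi)) * (2*(ε/20)/(s*δz)) := by
        gcongr
    _ ≤ ε := by
        have hx : (δz / Real.sqrt (2*Real.pi)) * (2*(ε/20)/(s*δz)) = ε/(10*(s*Real.sqrt (2*Real.pi))) := by
          field_simp
          ring
        rw [hx]
        have h60 : (60:ℝ) ≤ 10*(s*Real.sqrt (2*Real.pi)) := by nlinarith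
        have : ε/(10*(s*Real.sqrt (2*Real.pi))) ≤ ε/60 := by
          apply div_le_div_of_nonneg_left hε.le (by norm_num) h60
        linarith
end

section
/- Let H be a finite-dimensional complex inner product space and U a unitary operator on H. Fix real numbers ε, Δ, δz with 0 < ε ≤ 1/5, 0 < Δ ≤ π, 0 < δz ≤ Δ/√(2·log(20/ε)), and an integer L ≥ 2 with (L−1)·δz ≥ √(2·log(20/ε)). Set α_l := (δz/√(2π))·exp(−(l·δz)²/2) for l ∈ ℤ. Suppose β_{−L}, …, β_{L−1} are complex numbers such that ‖∑_{l=−L}^{L−1} (α_l − |β_l|/2) U^l ξ‖ ≤ ε for every unit vector ξ ∈ H. Then: (i) for every unit vector ψ₀ ∈ H with U ψ₀ = ψ₀, ‖∑_{l=−L}^{L−1} (|β_l|/2) U^l ψ₀ − ψ₀‖ ≤ 2ε; and (ii) for every unit vector ψ ∈ H with U ψ = e^{iλ} ψ for some real λ satisfying Δ ≤ λ ≤ 2π − Δ, ‖∑_{l=−L}^{L−1} (|β_l|/2) U^l ψ‖ ≤ 2ε. -/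
open Complex Real Finset
set_option maxHeartbeats 1000000
noncomputable section
theorem eig_zpow {H : Type*} [NormedAddCommGroup H] [InnerProductSpace ℂ H] (U : H ≃ₗᵢ[ℂ] H)
    (ψ : H) (c : ℂ) (hc : c ≠ 0) (h : U ψ = c • ψ) (l : ℤ) : (U ^ l) ψ = c ^ l • ψ := by
  have hsymm : U.symm ψ = c⁻¹ • ψ := by
    have h2 := congrArg U.symm h
    rw [U.symm_apply_apply, map_smul] at h2
    rw [eq_comm, inv_smul_eq_iff₀ hc]; exact h2
  induction l using Int.induction_on with
  | zero => simp
  | succ n ih =>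
      rw [zpow_add_one, zpow_add_one₀ hc]
      show (U ^ (n:ℤ)) (U ψ) = _
      rw [h, map_smul, ih, smul_smul, mul_comm]
  | pred n ih =>
      rw [zpow_sub_one, zpow_sub_one₀ hc]
      show (U ^ (-n:ℤ)) (U⁻¹ ψ) = _
      have h3 : U⁻¹ ψ = c⁻¹ • ψ := hsymm
      rw [h3, map_smul, ih, smul_smul, mul_comm]

theorem poisson (δz : ℝ) (hδz : 0 < δz) (lam : ℝ) :
    ∑' l : ℤ, ((δz / Real.sqrt (2*Real.pi) * Real.exp (-((l:ℝ)*δz)^2/2) : ℝ) : ℂ)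
        * Complex.exp (Complex.I * lam * l)
    = ∑' k : ℤ, ((Real.exp (-(lam - 2*Real.pi*k)^2 / (2*δz^2)) : ℝ) : ℂ) := by
  have hπ := Real.pi_pos
  set ar : ℝ := δz^2/(2*Real.pi) with har
  have har0 : 0 < ar := by positivity
  set b : ℂ := Complex.I * lam / (2*Real.pi) with hb
  have key := Complex.tsum_exp_neg_quadratic (a := (ar:ℂ)) (by simpa using har0) b
  have hc : ((δz / Real.sqrt (2*Real.pi) : ℝ) : ℂ) * (1/(ar:ℂ) ^ (1/2 : ℂ)) = 1 := by
    have h1 : ((ar:ℂ)) ^ (1/2 : ℂ) = ((ar ^ (1/2:ℝ) : ℝ) : ℂ) := by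
      rw [Complex.ofReal_cpow har0.le]; norm_num
    have h2 : ar ^ (1/2:ℝ) = δz / Real.sqrt (2*Real.pi) := by
      rw [← Real.sqrt_eq_rpow, har, Real.sqrt_div (by positivity), Real.sqrt_sq hδz.le]
    rw [h1, h2]
    have hne : δz / Real.sqrt (2*Real.pi) ≠ 0 := by positivity
    rw [one_div, mul_inv_cancel₀ (by exact_mod_cast hne)]
  calc ∑' l : ℤ, ((δz / Real.sqrt (2*Real.pi) * Real.exp (-((l:ℝ)*δz)^2/2) : ℝ) : ℂ)
        * Complex.exp (Complex.I * lam * l)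
      = ∑' l : ℤ, ((δz / Real.sqrt (2*Real.pi) : ℝ) : ℂ) *
          Complex.exp (-Real.pi * (ar:ℂ) * (l:ℂ)^2 + 2*Real.pi*b*(l:ℂ)) := by
        refine tsum_congr fun l => ?_
        rw [Complex.ofReal_mul, Complex.ofReal_exp, mul_assoc, ← Complex.exp_add]
        congr 2
        have : (2*(Real.pi:ℂ)) ≠ 0 := by
          simp [Real.pi_ne_zero]
        push_cast [hb, har]
        field_simp
    _ = ((δz / Real.sqrt (2*Real.pi) : ℝ) : ℂ) *
          ∑' l : ℤ, Complex.exp (-Real.pi * (ar:ℂ) * (l:ℂ)^2 + 2*Real.pi*b*(l:ℂ)) :=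
        tsum_mul_left
    _ = ((δz / Real.sqrt (2*Real.pi) : ℝ) : ℂ) * (1/(ar:ℂ) ^ (1/2 : ℂ) *
          ∑' n : ℤ, Complex.exp (-Real.pi / (ar:ℂ) * ((n:ℂ) + Complex.I*b)^2)) := by rw [key]
    _ = ∑' n : ℤ, Complex.exp (-Real.pi / (ar:ℂ) * ((n:ℂ) + Complex.I*b)^2) := by
        rw [← mul_assoc, hc, one_mul]
    _ = ∑' k : ℤ, ((Real.exp (-(lam - 2*Real.pi*k)^2 / (2*δz^2)) : ℝ) : ℂ) := by
        refine tsum_congr fun n => ?_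
        have hIb : Complex.I * b = ((-(lam / (2*Real.pi)) : ℝ) : ℂ) := by
          rw [hb]; push_cast
          rw [mul_div_assoc, ← mul_assoc, Complex.I_mul_I]; ring
        rw [hIb]
        have : -(Real.pi:ℂ) / (ar:ℂ) * ((n:ℂ) + ((-(lam / (2*Real.pi)) : ℝ) : ℂ))^2
            = ((-(lam - 2*Real.pi*n)^2 / (2*δz^2) : ℝ) : ℂ) := by
          push_cast [har]
          have h2π : ((Real.pi:ℂ)) ≠ 0 := by simp [Real.pi_ne_zero]
          have hδ : ((δz:ℂ)) ≠ 0 := by exact_mod_cast hδz.ne'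
          field_simp
          ring
        rw [this, Complex.ofReal_exp]

def alph (δz : ℝ) (l : ℤ) : ℝ := δz / Real.sqrt (2*Real.pi) * Real.exp (-((l:ℝ)*δz)^2/2)

def fC (δz lam : ℝ) (l : ℤ) : ℂ := ((alph δz l : ℝ) : ℂ) * Complex.exp (Complex.I*lam*l)

lemma alph_nonneg (δz : ℝ) (hδz : 0 < δz) (l : ℤ) : 0 ≤ alph δz l := by
  unfold alph; positivity

lemma norm_fC (δz : ℝ) (hδz : 0 < δz) (lam : ℝ) (l : ℤ) : ‖fC δz lam l‖ = alph δz l := by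
  unfold fC
  rw [norm_mul, Complex.norm_real, Real.norm_eq_abs, _root_.abs_of_nonneg (alph_nonneg δz hδz l)]
  have : Complex.I*lam*l = ((lam*l : ℝ):ℂ) * Complex.I := by push_cast; ring
  rw [this]
  have := Complex.norm_exp_ofReal_mul_I (lam*l)
  simp only [this, mul_one]

lemma alph_shift (δz : ℝ) (hδz : 0 < δz) (m n : ℕ) :
    alph δz ((m:ℤ)+(n:ℤ)) ≤ alph δz m * (Real.exp (-((m:ℝ)*δz^2)))^n := by
  unfold alph
  rw [mul_assoc, ← Real.exp_nat_mul, ← Real.exp_add]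
  refine mul_le_mul_of_nonneg_left (Real.exp_le_exp.2 ?_) (by positivity)
  push_cast
  nlinarith [sq_nonneg ((n:ℝ)*δz), sq_nonneg δz, Nat.cast_nonneg (α := ℝ) m,
        Nat.cast_nonneg (α := ℝ) n]

/-- geometric bound helper -/
lemma geom_bound (C r : ℝ) (hC : 0 ≤ C) (hr : 0 ≤ r) (hr1 : r < 1) (u : ℕ → ℝ)
    (h0 : ∀ n, 0 ≤ u n) (hle : ∀ n, u n ≤ C * r^n) :
    Summable u ∧ ∑' n, u n ≤ C * (1-r)⁻¹ := by
  have hg : Summable (fun n : ℕ => C * r^n) :=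
    (summable_geometric_of_lt_one hr hr1).mul_left C
  have hu : Summable u := hg.of_nonneg_of_le h0 hle
  refine ⟨hu, ?_⟩
  calc ∑' n, u n ≤ ∑' n : ℕ, C * r^n := Summable.tsum_le_tsum hle hu hg
    _ = C * (1-r)⁻¹ := by rw [tsum_mul_left, tsum_geometric_of_lt_one hr hr1]

lemma alph_tail (δz : ℝ) (hδz : 0 < δz) (m : ℕ) (hm : 1 ≤ m) (u : ℕ → ℝ)
    (hle : ∀ n : ℕ, ∃ j : ℕ, n ≤ j ∧ u n = alph δz ((m:ℤ)+(j:ℤ))) :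
    Summable u ∧ ∑' n, u n ≤ alph δz m * (1 - Real.exp (-((m:ℝ)*δz^2)))⁻¹ := by
  have hr0 : (0:ℝ) ≤ Real.exp (-((m:ℝ)*δz^2)) := (Real.exp_pos _).le
  have hr1 : Real.exp (-((m:ℝ)*δz^2)) < 1 := by
    rw [Real.exp_lt_one_iff]
    have : (0:ℝ) < (m:ℝ) := by exact_mod_cast hm
    nlinarith [sq_nonneg δz, mul_pos this (mul_pos hδz hδz)]
  refine geom_bound _ _ (alph_nonneg δz hδz m) hr0 hr1 u ?_ ?_
  · intro n; obtain ⟨j, hj, hju⟩ := hle n; rw [hju]; exact alph_nonneg δz hδz _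
  · intro n
    obtain ⟨j, hj, hju⟩ := hle n
    rw [hju]
    calc alph δz ((m:ℤ)+(j:ℤ)) ≤ alph δz m * (Real.exp (-((m:ℝ)*δz^2)))^j :=
          alph_shift δz hδz m j
      _ ≤ alph δz m * (Real.exp (-((m:ℝ)*δz^2)))^n := by
          exact mul_le_mul_of_nonneg_left
            (pow_le_pow_of_le_one hr0 hr1.le hj) (alph_nonneg δz hδz m)

lemma summable_fC_nat (δz : ℝ) (hδz : 0 < δz) (lam : ℝ) :
    Summable (fun n : ℕ => fC δz lam n) := by
  rw [← summable_nat_add_iff 1]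
  apply Summable.of_norm
  have := alph_tail δz hδz 1 le_rfl (fun n : ℕ => alph δz ((1:ℤ)+(n:ℤ)))
      (fun n => ⟨n, le_rfl, rfl⟩)
  refine this.1.congr fun n => ?_
  rw [norm_fC δz hδz]
  congr 1
  push_cast; ring

lemma summable_fC_neg (δz : ℝ) (hδz : 0 < δz) (lam : ℝ) :
    Summable (fun n : ℕ => fC δz lam (-((n:ℤ)+1))) := by
  apply Summable.of_norm
  have := alph_tail δz hδz 1 le_rfl (fun n : ℕ => alph δz ((1:ℤ)+(n:ℤ)))
      (fun n => ⟨n, le_rfl, rfl⟩)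
  refine this.1.congr fun n => ?_
  rw [norm_fC δz hδz]
  unfold alph
  congr 3
  push_cast; ring


theorem split_sum {M : Type*} [AddCommMonoid M] (f : ℤ → M) (N : ℕ) :
    ∑ l ∈ Finset.Icc (-(N:ℤ)) ((N:ℤ)-1), f l
      = ∑ n ∈ Finset.range N, f n + ∑ n ∈ Finset.range N, f (-((n:ℤ)+1)) := by
  have h1 : Finset.Icc (-(N:ℤ)) ((N:ℤ)-1)
      = Finset.Icc (-(N:ℤ)) (-1) ∪ Finset.Icc 0 ((N:ℤ)-1) := by
    ext l; simp only [Finset.mem_Icc, Finset.mem_union]; omega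
  have hdisj : Disjoint (Finset.Icc (-(N:ℤ)) (-1)) (Finset.Icc 0 ((N:ℤ)-1)) := by
    rw [Finset.disjoint_left]; intro a ha hb
    simp only [Finset.mem_Icc] at ha hb; omega
  have h2 : Finset.Icc (0:ℤ) ((N:ℤ)-1)
      = Finset.map ⟨fun n : ℕ => (n:ℤ), by intro a b h; simpa using h⟩ (Finset.range N) := by
    ext l; simp only [Finset.mem_Icc, Finset.mem_map, Finset.mem_range,
      Function.Embedding.coeFn_mk]
    dsimp only [DFunLike.coe, Function.instFunLikeEmbedding]
    constructor
    · intro h; exact ⟨l.toNat, by omega, by omega⟩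
    · rintro ⟨n, hn, rfl⟩; omega
  have h3 : Finset.Icc (-(N:ℤ)) (-1)
      = Finset.map ⟨fun n : ℕ => -((n:ℤ)+1), by intro a b h; simpa using h⟩ (Finset.range N) := by
    ext l; simp only [Finset.mem_Icc, Finset.mem_map, Finset.mem_range,
      Function.Embedding.coeFn_mk]
    dsimp only [DFunLike.coe, Function.instFunLikeEmbedding]
    constructor
    · intro h; exact ⟨(-(l+1)).toNat, by omega, by omega⟩
    · rintro ⟨n, hn, rfl⟩; omega
  rw [h1, Finset.sum_union hdisj, h2, h3, Finset.sum_map, Finset.sum_map]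
  dsimp only [DFunLike.coe, Function.instFunLikeEmbedding]
  rw [add_comm]

theorem trunc (δz : ℝ) (hδz : 0 < δz) (N : ℕ) (hN : 1 ≤ N) (lam : ℝ) :
    ‖(∑ l ∈ Finset.Icc (-(N:ℤ)) ((N:ℤ)-1), fC δz lam l) - ∑' l : ℤ, fC δz lam l‖
      ≤ 2 * (alph δz N * (1 - Real.exp (-((N:ℝ)*δz^2)))⁻¹) := by
  have hs1 := summable_fC_nat δz hδz lam
  have hs2 := summable_fC_neg δz hδz lam
  have hsplit := split_sum (fC δz lam) N
  have htsum : ∑' l : ℤ, fC δz lam l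
      = (∑' n : ℕ, fC δz lam n) + ∑' n : ℕ, fC δz lam (-((n:ℤ)+1)) := by
    exact tsum_of_nat_of_neg_add_one hs1 hs2
  have h1 : ∑' n : ℕ, fC δz lam n
      = ∑ i ∈ Finset.range N, fC δz lam i + ∑' n : ℕ, fC δz lam ((n+N : ℕ)) :=
    (Summable.sum_add_tsum_nat_add N hs1).symm
  have h2 : ∑' n : ℕ, fC δz lam (-((n:ℤ)+1))
      = ∑ i ∈ Finset.range N, fC δz lam (-((i:ℤ)+1))
        + ∑' n : ℕ, fC δz lam (-(((n+N : ℕ) : ℤ)+1)) :=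
    (Summable.sum_add_tsum_nat_add N hs2).symm
  -- tail 1 bound
  have tail1 := alph_tail δz hδz N hN (fun n : ℕ => ‖fC δz lam ((n+N : ℕ))‖)
    (fun n => ⟨n, le_rfl, by
      show ‖fC δz lam ((n+N : ℕ))‖ = _
      rw [norm_fC δz hδz]; congr 1; push_cast; ring⟩)
  have tail2 := alph_tail δz hδz N hN (fun n : ℕ => ‖fC δz lam (-(((n+N : ℕ) : ℤ)+1))‖)
    (fun n => ⟨n+1, by omega, by
      show ‖fC δz lam (-(((n+N : ℕ) : ℤ)+1))‖ = _
      rw [norm_fC δz hδz]; unfold alph; congr 3; push_cast; ring⟩)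
  have hb1 : ‖∑' n : ℕ, fC δz lam ((n+N : ℕ))‖
      ≤ alph δz N * (1 - Real.exp (-((N:ℝ)*δz^2)))⁻¹ :=
    le_trans (norm_tsum_le_tsum_norm tail1.1) tail1.2
  have hb2 : ‖∑' n : ℕ, fC δz lam (-(((n+N : ℕ) : ℤ)+1))‖
      ≤ alph δz N * (1 - Real.exp (-((N:ℝ)*δz^2)))⁻¹ :=
    le_trans (norm_tsum_le_tsum_norm tail2.1) tail2.2
  rw [hsplit, htsum, h1, h2]
  rw [show ∀ a b c d : ℂ, (a + b) - ((a + c) + (b + d)) = -(c + d) by intros; ring]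
  rw [norm_neg]
  calc ‖∑' n : ℕ, fC δz lam ((n+N : ℕ)) + ∑' n : ℕ, fC δz lam (-(((n+N:ℕ):ℤ)+1))‖
      ≤ ‖∑' n : ℕ, fC δz lam ((n+N : ℕ))‖ + ‖∑' n : ℕ, fC δz lam (-(((n+N:ℕ):ℤ)+1))‖ :=
        norm_add_le _ _
    _ ≤ _ := by rw [two_mul]; exact add_le_add hb1 hb2

def gR (δz lam : ℝ) (k : ℤ) : ℝ := Real.exp (-(lam - 2*Real.pi*k)^2/(2*δz^2))

/-- geometric bound helper (copy) -/
lemma geom_bound' (C r : ℝ) (hC : 0 ≤ C) (hr : 0 ≤ r) (hr1 : r < 1) (u : ℕ → ℝ)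
    (h0 : ∀ n, 0 ≤ u n) (hle : ∀ n, u n ≤ C * r^n) :
    Summable u ∧ ∑' n, u n ≤ C * (1-r)⁻¹ := by
  have hg : Summable (fun n : ℕ => C * r^n) :=
    (summable_geometric_of_lt_one hr hr1).mul_left C
  have hu : Summable u := hg.of_nonneg_of_le h0 hle
  exact ⟨hu, by
    calc ∑' n, u n ≤ ∑' n : ℕ, C * r^n := Summable.tsum_le_tsum hle hu hg
      _ = C * (1-r)⁻¹ := by rw [tsum_mul_left, tsum_geometric_of_lt_one hr hr1]⟩

theorem theta_est (δz Δ lam : ℝ) (hδz : 0 < δz) (hΔ : 0 < Δ) (hΔπ : Δ ≤ Real.pi)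
    (h0 : 0 ≤ lam) (h2 : lam ≤ 2*Real.pi - Δ) :
    Summable (fun k : ℤ => gR δz lam k) ∧
    |∑' k : ℤ, gR δz lam k - gR δz lam 0|
      ≤ 2 * (Real.exp (-Δ^2/(2*δz^2)) * (1 - (Real.exp (-Δ^2/(2*δz^2)))^2)⁻¹) := by
  have hπ := Real.pi_pos
  set q : ℝ := Real.exp (-Δ^2/(2*δz^2)) with hq
  have hq0 : 0 ≤ q := (Real.exp_pos _).le
  have hq1 : q < 1 := by
    rw [hq, Real.exp_lt_one_iff, neg_div, neg_lt_zero]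
    positivity
  have hq21 : q^2 < 1 := by nlinarith
  -- key pointwise bound
  have key : ∀ (t : ℝ) (k : ℕ), (2*(k:ℝ)+1)*Δ ≤ |t| →
      Real.exp (-t^2/(2*δz^2)) ≤ q * (q^2)^k := by
    intro t k ht
    have h1 : q * (q^2)^k = Real.exp ((2*(k:ℝ)+1) * (-Δ^2/(2*δz^2))) := by
      rw [hq, ← Real.exp_nat_mul, ← Real.exp_nat_mul, ← Real.exp_add]
      congr 1
      push_cast; ring
    have h2δ : (0:ℝ) < 2*δz^2 := by positivity
    have ht2 : (2*(k:ℝ)+1)*Δ^2 ≤ t^2 := by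
      have h3 : 0 ≤ (2*(k:ℝ)+1)*Δ := by positivity
      nlinarith [_root_.sq_abs t, abs_nonneg t]
    rw [h1, Real.exp_le_exp,
      show (2*(k:ℝ)+1) * (-Δ^2/(2*δz^2)) = -((2*(k:ℝ)+1)*Δ^2)/(2*δz^2) by ring]
    rw [neg_div, neg_div, neg_le_neg_iff]
    gcongr
  have hpos_bound : ∀ k : ℕ, gR δz lam ((k:ℤ)+1) ≤ q*(q^2)^k := by
    intro k
    apply key
    refine le_abs.mpr (Or.inr ?_)
    push_cast
    nlinarith [Nat.cast_nonneg (α := ℝ) k]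
  have hneg_bound : ∀ k : ℕ, gR δz lam (-((k:ℤ)+1)) ≤ q*(q^2)^k := by
    intro k
    apply key
    refine le_abs.mpr (Or.inl ?_)
    push_cast
    nlinarith [Nat.cast_nonneg (α := ℝ) k]
  have s_pos := geom_bound' q (q^2) hq0 (by positivity) hq21 (fun k : ℕ => gR δz lam ((k:ℤ)+1))
    (fun k => (Real.exp_pos _).le) hpos_bound
  have s_neg := geom_bound' q (q^2) hq0 (by positivity) hq21 (fun k : ℕ => gR δz lam (-((k:ℤ)+1)))
    (fun k => (Real.exp_pos _).le) hneg_bound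
  have hnat : Summable (fun n : ℕ => gR δz lam (n:ℤ)) := by
    rw [← summable_nat_add_iff 1]
    exact s_pos.1.congr fun n => by push_cast; ring_nf
  have hsummZ : Summable (fun k : ℤ => gR δz lam k) :=
    Summable.of_nat_of_neg_add_one hnat (s_neg.1.congr fun n => by push_cast; ring_nf)
  refine ⟨hsummZ, ?_⟩
  have hnegsum : Summable (fun n : ℕ => gR δz lam (-((n:ℕ):ℤ)-1)) :=
    s_neg.1.congr fun n => by push_cast; ring_nf
  have htsum : ∑' k : ℤ, gR δz lam k
      = (gR δz lam 0 + ∑' n : ℕ, gR δz lam ((n:ℤ)+1)) + ∑' n : ℕ, gR δz lam (-((n:ℤ)+1)) := by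
    rw [tsum_of_nat_of_neg_add_one hnat (by exact s_neg.1.congr fun n => by push_cast; ring_nf)]
    congr 1
    rw [Summable.tsum_eq_zero_add hnat]
    have e0 : gR δz lam ((0:ℕ):ℤ) = gR δz lam 0 := by norm_num
    rw [e0]
    exact congrArg _ (tsum_congr fun n => by push_cast; ring_nf)
  rw [htsum]
  have ht1 : 0 ≤ ∑' n : ℕ, gR δz lam ((n:ℤ)+1) := tsum_nonneg fun n => (Real.exp_pos _).le
  have ht2 : 0 ≤ ∑' n : ℕ, gR δz lam (-((n:ℤ)+1)) := tsum_nonneg fun n => (Real.exp_pos _).le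
  rw [show gR δz lam 0 + ∑' n : ℕ, gR δz lam ((n:ℤ)+1) + ∑' n : ℕ, gR δz lam (-((n:ℤ)+1))
      - gR δz lam 0 = ∑' n : ℕ, gR δz lam ((n:ℤ)+1) + ∑' n : ℕ, gR δz lam (-((n:ℤ)+1)) by ring]
  rw [_root_.abs_of_nonneg (by linarith : (0:ℝ) ≤ ∑' n : ℕ, gR δz lam ((n:ℤ)+1) + ∑' n : ℕ, gR δz lam (-((n:ℤ)+1)))]
  linarith [s_pos.2, s_neg.2]


theorem numbers (ε Δ δz : ℝ) (L : ℤ) (N : ℕ) (hNL : ((N:ℕ):ℝ) = (L:ℝ))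
    (hε : 0 < ε) (hε' : ε ≤ 1 / 5)
    (hΔ : 0 < Δ) (hΔ' : Δ ≤ Real.pi)
    (hδz : 0 < δz) (hδz' : δz ≤ Δ / Real.sqrt (2 * Real.log (20 / ε)))
    (hL : 2 ≤ L) (hLδz : Real.sqrt (2 * Real.log (20 / ε)) ≤ ((L : ℝ) - 1) * δz) :
    2 * (alph δz (N : ℤ) * (1 - Real.exp (-(((N:ℕ) : ℝ)*δz^2)))⁻¹) ≤ ε/10
    ∧ Real.exp (-Δ^2/(2*δz^2)) ≤ ε/20 ∧ Real.exp (-Δ^2/(2*δz^2)) ≤ 1/100 := by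
  have hπ := Real.pi_pos
  have hπ1 : 3.141592 < Real.pi := Real.pi_gt_d6
  have hπ2 : Real.pi < 3.15 := Real.pi_lt_d2
  set T : ℝ := Real.sqrt (2 * Real.log (20 / ε)) with hT
  have h100 : (100:ℝ) ≤ 20/ε := by
    rw [le_div_iff₀ hε]; linarith
  have hlog4 : (4:ℝ) ≤ Real.log (20/ε) := by
    rw [Real.le_log_iff_exp_le (by linarith)]
    have h1 : Real.exp 4 = Real.exp 1 ^ (4:ℕ) := by
      rw [← Real.exp_nat_mul]; norm_num
    have h2 : Real.exp 1 ^ (4:ℕ) ≤ (2.7182818286:ℝ)^(4:ℕ) :=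
      pow_le_pow_left₀ (Real.exp_pos 1).le Real.exp_one_lt_d9.le 4
    calc Real.exp 4 ≤ (2.7182818286:ℝ)^(4:ℕ) := by rw [h1]; exact h2
      _ ≤ 100 := by norm_num
      _ ≤ 20/ε := h100
  have hlogpos : (0:ℝ) < 2 * Real.log (20/ε) := by linarith
  have hT2 : T^2 = 2 * Real.log (20/ε) := Real.sq_sqrt hlogpos.le
  have hT28 : (2.8:ℝ) ≤ T := by
    rw [hT, show (2.8:ℝ) = Real.sqrt (2.8^2) by rw [Real.sqrt_sq (by norm_num)]]
    apply Real.sqrt_le_sqrt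
    nlinarith
  have hT0 : (0:ℝ) < T := by linarith
  have hexpT : Real.exp (-(T^2/2)) = ε/20 := by
    rw [hT2, show (2 * Real.log (20/ε))/2 = Real.log (20/ε) by ring,
      Real.exp_neg, Real.exp_log (by linarith)]
    rw [inv_div]
  have hTδz : T * δz ≤ Δ := by
    rw [le_div_iff₀ hT0] at hδz'
    linarith [hδz']
  have hq20 : Real.exp (-Δ^2/(2*δz^2)) ≤ ε/20 := by
    rw [← hexpT, Real.exp_le_exp, neg_div, neg_le_neg_iff,
      div_le_div_iff₀ (by norm_num : (0:ℝ) < 2) (by positivity)]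
    have hsq : (T*δz)^2 ≤ Δ^2 := by nlinarith [hTδz, mul_nonneg hT0.le hδz.le, hΔ.le]
    nlinarith [hsq]
  have hq100 : Real.exp (-Δ^2/(2*δz^2)) ≤ 1/100 := by linarith
  refine ⟨?_, hq20, hq100⟩
  -- truncation bound
  have hNZ : (((N:ℤ)):ℝ) = (L:ℝ) := by push_cast at hNL ⊢; exact hNL
  unfold alph
  rw [hNZ, hNL]
  set y : ℝ := (L : ℝ) * δz with hy
  have hyT : T ≤ y := by rw [hy]; nlinarith
  have hy0 : 0 < y := lt_of_lt_of_le hT0 hyT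
  have hE : Real.exp (-((L:ℝ)*δz)^2/2) ≤ ε/20 := by
    rw [← hexpT, Real.exp_le_exp, ← hy]
    have : -y^2/2 ≤ -(T^2/2) := by nlinarith
    calc -(y)^2/2 = -y^2/2 := by ring
      _ ≤ -(T^2/2) := this
  set x : ℝ := (L : ℝ) * δz^2 with hx
  have hxy : x = y * δz := by rw [hx, hy]; ring
  have hx0 : 0 < x := by rw [hxy]; positivity
  have hden : x/(1+x) ≤ 1 - Real.exp (-x) := by
    have h1 : 1 + x ≤ Real.exp x := by linarith [Real.add_one_le_exp x]
    have hpos1 : (0:ℝ) < 1 + x := by linarith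
    have h2 : Real.exp (-x) ≤ (1+x)⁻¹ := by
      rw [Real.exp_neg]
      exact inv_anti₀ hpos1 h1
    have h3 : (1+x)⁻¹ = 1 - x/(1+x) := by field_simp; ring
    rw [h3] at h2
    linarith
  have hdenpos : (0:ℝ) < x/(1+x) := by positivity
  have hinv : (1 - Real.exp (-x))⁻¹ ≤ (1+x)/x := by
    rw [show (1+x)/x = (x/(1+x))⁻¹ by rw [inv_div]]
    exact inv_anti₀ hdenpos hden
  have hs : (2.5:ℝ) ≤ Real.sqrt (2*Real.pi) := by
    rw [show (2.5:ℝ) = Real.sqrt (2.5^2) by rw [Real.sqrt_sq (by norm_num)]]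
    apply Real.sqrt_le_sqrt
    nlinarith
  have hs0 : (0:ℝ) < Real.sqrt (2*Real.pi) := by linarith
  have hstep : 2 * (δz / Real.sqrt (2*Real.pi) * Real.exp (-((L:ℝ)*δz)^2/2)
        * (1 - Real.exp (-x))⁻¹)
      ≤ 2 * ((δz / Real.sqrt (2*Real.pi) * (ε/20)) * ((1+x)/x)) := by
    have hinvpos : (0:ℝ) ≤ (1 - Real.exp (-x))⁻¹ := by
      apply inv_nonneg.2
      nlinarith [hden, hdenpos]
    gcongr
  have hδzπ : δz ≤ 3.15/2.8 := by
    have h1 : Δ/T ≤ 3.15/2.8 :=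
      div_le_div₀ (by norm_num) (by linarith) (by norm_num) hT28
    linarith [hδz']
  have h1y : 1/y ≤ 1/2.8 :=
    div_le_div_of_nonneg_left (by norm_num) (by linarith) (by linarith)
  have hkey : δz * ((1+x)/x) = 1/y + δz := by
    rw [hxy]
    field_simp
  have hfin : 2 * ((δz / Real.sqrt (2*Real.pi) * (ε/20)) * ((1+x)/x)) ≤ ε/10 := by
    have e1 : 2 * ((δz / Real.sqrt (2*Real.pi) * (ε/20)) * ((1+x)/x))
        = (ε/10) * ((δz * ((1+x)/x)) / Real.sqrt (2*Real.pi)) := by ring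
    rw [e1, hkey]
    have h2 : (1/y + δz) / Real.sqrt (2*Real.pi) ≤ 1 := by
      rw [div_le_one hs0]
      calc 1/y + δz ≤ 1/2.8 + 3.15/2.8 := by linarith
        _ ≤ 2.5 := by norm_num
        _ ≤ Real.sqrt (2*Real.pi) := hs
    nlinarith
  exact le_trans hstep hfin

theorem factB (ε Δ δz : ℝ) (L : ℤ)
    (hε : 0 < ε) (hε' : ε ≤ 1 / 5)
    (hΔ : 0 < Δ) (hΔ' : Δ ≤ Real.pi)
    (hδz : 0 < δz) (hδz' : δz ≤ Δ / Real.sqrt (2 * Real.log (20 / ε)))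
    (hL : 2 ≤ L) (hLδz : Real.sqrt (2 * Real.log (20 / ε)) ≤ ((L : ℝ) - 1) * δz)
    (lam : ℝ) (hl1 : Δ ≤ lam) (hl2 : lam ≤ 2 * Real.pi - Δ) :
    ‖∑ l ∈ Finset.Icc (-L) (L - 1), fC δz lam l‖ ≤ ε := by
  set N : ℕ := L.toNat with hN
  have hNL : ((N:ℕ):ℤ) = L := Int.toNat_of_nonneg (by omega)
  have hNLr : ((N:ℕ):ℝ) = (L:ℝ) := by exact_mod_cast congrArg (Int.cast : ℤ → ℝ) hNL
  have hIcc : Finset.Icc (-L) (L - 1) = Finset.Icc (-(N:ℤ)) ((N:ℤ)-1) := by rw [hNL]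
  have hnum := numbers ε Δ δz L N hNLr hε hε' hΔ hΔ' hδz hδz' hL hLδz
  have htr := trunc δz hδz N (by omega) lam
  have hpoisson : ∑' l : ℤ, fC δz lam l = ∑' k : ℤ, ((gR δz lam k : ℝ) : ℂ) := by
    simpa [fC, alph, gR] using poisson δz hδz lam
  set q : ℝ := Real.exp (-Δ^2/(2*δz^2)) with hq
  have θ := theta_est δz Δ lam hδz hΔ hΔ' (le_trans hΔ.le hl1) hl2
  have hg0 : gR δz lam 0 ≤ q := by
    unfold gR
    rw [hq, Real.exp_le_exp]
    have h1 : Δ^2 ≤ (lam - 2*Real.pi*(0:ℤ))^2 := by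
      push_cast
      nlinarith [hΔ.le, hl1]
    have h2 : (0:ℝ) < 2*δz^2 := by positivity
    rw [neg_div, neg_div, neg_le_neg_iff]
    gcongr
  have hqinv : (1 - q^2)⁻¹ ≤ 2 := by
    have h1 : q^2 ≤ 1/2 := by nlinarith [hnum.2.2, Real.exp_pos (-Δ^2/(2*δz^2))]
    rw [show (2:ℝ) = (1/2)⁻¹ by norm_num]
    apply inv_anti₀ (by norm_num)
    linarith
  have hq0 : 0 ≤ q := (Real.exp_pos _).le
  have htheta : ∑' k : ℤ, gR δz lam k ≤ 5 * q := by
    have h1 := (abs_le.1 θ.2).2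
    nlinarith [hg0, hqinv, hq0]
  have hthetapos : 0 ≤ ∑' k : ℤ, gR δz lam k := tsum_nonneg fun k => (Real.exp_pos _).le
  have habs2 : ‖∑' k : ℤ, ((gR δz lam k : ℝ) : ℂ)‖ ≤ 5 * q := by
    rw [← Complex.ofReal_tsum, Complex.norm_real, Real.norm_eq_abs, _root_.abs_of_nonneg hthetapos]
    exact htheta
  rw [hIcc]
  have e : (∑ l ∈ Finset.Icc (-(N:ℤ)) ((N:ℤ)-1), fC δz lam l)
      = ((∑ l ∈ Finset.Icc (-(N:ℤ)) ((N:ℤ)-1), fC δz lam l) - ∑' l : ℤ, fC δz lam l)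
        + ∑' l : ℤ, fC δz lam l := by ring
  rw [e]
  refine le_trans (norm_add_le _ _) ?_
  have h2 : ‖∑' l : ℤ, fC δz lam l‖ ≤ 5*q := by rw [hpoisson]; exact habs2
  have h1 := le_trans htr hnum.1
  have h3 := hnum.2.1
  linarith

theorem factA (ε Δ δz : ℝ) (L : ℤ)
    (hε : 0 < ε) (hε' : ε ≤ 1 / 5)
    (hΔ : 0 < Δ) (hΔ' : Δ ≤ Real.pi)
    (hδz : 0 < δz) (hδz' : δz ≤ Δ / Real.sqrt (2 * Real.log (20 / ε)))
    (hL : 2 ≤ L) (hLδz : Real.sqrt (2 * Real.log (20 / ε)) ≤ ((L : ℝ) - 1) * δz) :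
    |(∑ l ∈ Finset.Icc (-L) (L - 1), alph δz l) - 1| ≤ ε := by
  have hπ := Real.pi_pos
  set N : ℕ := L.toNat with hN
  have hNL : ((N:ℕ):ℤ) = L := Int.toNat_of_nonneg (by omega)
  have hNLr : ((N:ℕ):ℝ) = (L:ℝ) := by exact_mod_cast congrArg (Int.cast : ℤ → ℝ) hNL
  have hIcc : Finset.Icc (-L) (L - 1) = Finset.Icc (-(N:ℤ)) ((N:ℤ)-1) := by rw [hNL]
  have hnum := numbers ε Δ δz L N hNLr hε hε' hΔ hΔ' hδz hδz' hL hLδz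
  have htr := trunc δz hδz N (by omega) 0
  have hpoisson : ∑' l : ℤ, fC δz 0 l = ∑' k : ℤ, ((gR δz 0 k : ℝ) : ℂ) := by
    simpa [fC, alph, gR] using poisson δz hδz 0
  set q : ℝ := Real.exp (-Δ^2/(2*δz^2)) with hq
  have θ := theta_est δz Δ 0 hδz hΔ hΔ' le_rfl (by linarith)
  have hg0 : gR δz 0 0 = 1 := by
    unfold gR
    norm_num
  have hqinv : (1 - q^2)⁻¹ ≤ 2 := by
    have h1 : q^2 ≤ 1/2 := by nlinarith [hnum.2.2, Real.exp_pos (-Δ^2/(2*δz^2))]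
    rw [show (2:ℝ) = (1/2)⁻¹ by norm_num]
    apply inv_anti₀ (by norm_num)
    linarith
  have hq0 : 0 ≤ q := (Real.exp_pos _).le
  have htheta : |(∑' k : ℤ, gR δz 0 k) - 1| ≤ 4 * q := by
    rw [← hg0]
    refine le_trans θ.2 ?_
    nlinarith [hqinv, hq0]
  -- finite sum of fC at lam = 0 is the real sum
  have hfin : (∑ l ∈ Finset.Icc (-(N:ℤ)) ((N:ℤ)-1), fC δz 0 l)
      = (((∑ l ∈ Finset.Icc (-(N:ℤ)) ((N:ℤ)-1), alph δz l : ℝ)) : ℂ) := by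
    rw [Complex.ofReal_sum]
    refine Finset.sum_congr rfl fun l _ => ?_
    unfold fC
    norm_num
  have key : ‖(((∑ l ∈ Finset.Icc (-(N:ℤ)) ((N:ℤ)-1), alph δz l : ℝ)) : ℂ)
      - ((1:ℝ):ℂ)‖ ≤ ε := by
    have e1 : (((∑ l ∈ Finset.Icc (-(N:ℤ)) ((N:ℤ)-1), alph δz l : ℝ)) : ℂ) - ((1:ℝ):ℂ)
        = ((∑ l ∈ Finset.Icc (-(N:ℤ)) ((N:ℤ)-1), fC δz 0 l) - ∑' l : ℤ, fC δz 0 l)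
          + ((∑' k : ℤ, ((gR δz 0 k : ℝ) : ℂ)) - ((1:ℝ):ℂ)) := by
      rw [hfin, hpoisson]
      ring
    rw [e1]
    refine le_trans (norm_add_le _ _) ?_
    have h2 : ‖(∑' k : ℤ, ((gR δz 0 k : ℝ) : ℂ)) - ((1:ℝ):ℂ)‖ ≤ 4*q := by
      rw [← Complex.ofReal_tsum, ← Complex.ofReal_sub, Complex.norm_real, Real.norm_eq_abs]
      exact htheta
    have h1 := le_trans htr hnum.1
    have := hnum.2.1
    linarith
  rw [hIcc]
  calc |(∑ l ∈ Finset.Icc (-(N:ℤ)) ((N:ℤ)-1), alph δz l) - 1|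
      = ‖(((∑ l ∈ Finset.Icc (-(N:ℤ)) ((N:ℤ)-1), alph δz l : ℝ)) : ℂ)
        - ((1:ℝ):ℂ)‖ := by
        rw [← Complex.ofReal_sub, Complex.norm_real, Real.norm_eq_abs]
    _ ≤ ε := key
lemma norm_weighted {H : Type*} [NormedAddCommGroup H] [InnerProductSpace ℂ H]
    (U : H ≃ₗᵢ[ℂ] H) (ψ : H) (hψ : ‖ψ‖ = 1) (c : ℂ) (hc : c ≠ 0) (hU : U ψ = c • ψ)
    (s : Finset ℤ) (r : ℤ → ℝ) :
    ‖∑ l ∈ s, ((r l : ℝ):ℂ) • (U ^ l) ψ‖ = ‖∑ l ∈ s, ((r l:ℝ):ℂ) * c ^ l‖ := by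
  have h1 : ∀ l ∈ s, ((r l:ℝ):ℂ) • (U ^ l) ψ = (((r l:ℝ):ℂ) * c ^ l) • ψ := fun l _ => by
    rw [eig_zpow U ψ c hc hU l, smul_smul]
  rw [Finset.sum_congr rfl h1, ← Finset.sum_smul, norm_smul, hψ, mul_one]

/-- Corollary 2: replacing the exact Gaussian coefficients `α_l` by nearby
nonnegative coefficients `|β_l|/2` preserves the approximate action on eigenvectors,
up to a doubled error. -/
theorem stmt_4 {H : Type*} [NormedAddCommGroup H] [InnerProductSpace ℂ H]
    [FiniteDimensional ℂ H] (U : H ≃ₗᵢ[ℂ] H)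
    (ε Δ δz : ℝ) (L : ℤ) (β : ℤ → ℂ)
    (hε : 0 < ε) (hε' : ε ≤ 1 / 5)
    (hΔ : 0 < Δ) (hΔ' : Δ ≤ Real.pi)
    (hδz : 0 < δz) (hδz' : δz ≤ Δ / Real.sqrt (2 * Real.log (20 / ε)))
    (hL : 2 ≤ L) (hLδz : Real.sqrt (2 * Real.log (20 / ε)) ≤ ((L : ℝ) - 1) * δz)
    (hβ : ∀ ξ : H, ‖ξ‖ = 1 →
      ‖∑ l ∈ Finset.Icc (-L) (L - 1),
          ((δz / Real.sqrt (2 * Real.pi) * Real.exp (-((l : ℝ) * δz) ^ 2 / 2) -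
              ‖β l‖ / 2 : ℝ) : ℂ) • (U ^ l) ξ‖ ≤ ε) :
    (∀ ψ₀ : H, ‖ψ₀‖ = 1 → U ψ₀ = ψ₀ →
      ‖(∑ l ∈ Finset.Icc (-L) (L - 1),
          ((‖β l‖ / 2 : ℝ) : ℂ) • (U ^ l) ψ₀) - ψ₀‖ ≤ 2 * ε) ∧
    (∀ (ψ : H) (lam : ℝ), ‖ψ‖ = 1 → Δ ≤ lam → lam ≤ 2 * Real.pi - Δ →
      U ψ = Complex.exp (Complex.I * lam) • ψ →
      ‖∑ l ∈ Finset.Icc (-L) (L - 1),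
          ((‖β l‖ / 2 : ℝ) : ℂ) • (U ^ l) ψ‖ ≤ 2 * ε) := by
  have hA := factA ε Δ δz L hε hε' hΔ hΔ' hδz hδz' hL hLδz
  set s : Finset ℤ := Finset.Icc (-L) (L - 1) with hs
  set b : ℤ → ℝ := fun l => ‖β l‖ / 2 with hb
  set r : ℤ → ℝ := fun l => δz / Real.sqrt (2 * Real.pi)
      * Real.exp (-((l : ℝ) * δz) ^ 2 / 2) - ‖β l‖ / 2 with hr
  have hralph : ∀ l : ℤ, r l = alph δz l - b l := fun l => rfl
  constructor
  · intro ψ₀ hψ hU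
    have hU1 : U ψ₀ = (1:ℂ) • ψ₀ := by rw [one_smul]; exact hU
    have hβ' := hβ ψ₀ hψ
    rw [norm_weighted U ψ₀ hψ 1 one_ne_zero hU1 s r] at hβ'
    have hβ'' : |∑ l ∈ s, r l| ≤ ε := by
      have e : (∑ l ∈ s, ((r l:ℝ):ℂ) * (1:ℂ) ^ l) = (((∑ l ∈ s, r l : ℝ)):ℂ) := by
        rw [Complex.ofReal_sum]
        exact Finset.sum_congr rfl fun l _ => by rw [one_zpow, mul_one]
      rwa [e, Complex.norm_real, Real.norm_eq_abs] at hβ'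
    -- goal
    have hsb : (∑ l ∈ s, ((b l : ℝ):ℂ) • (U ^ l) ψ₀) - ψ₀
        = (((∑ l ∈ s, b l : ℝ) - 1 : ℝ):ℂ) • ψ₀ := by
      have h1 : ∀ l ∈ s, ((b l:ℝ):ℂ) • (U ^ l) ψ₀ = ((b l:ℝ):ℂ) • ψ₀ := fun l _ => by
        rw [eig_zpow U ψ₀ 1 one_ne_zero hU1 l, one_zpow, one_smul]
      rw [Finset.sum_congr rfl h1, ← Finset.sum_smul]
      rw [Complex.ofReal_sub, Complex.ofReal_sum, Complex.ofReal_one, sub_smul, one_smul]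
    rw [hsb, norm_smul, hψ, mul_one, Complex.norm_real, Real.norm_eq_abs]
    have hsplit : ∑ l ∈ s, r l = (∑ l ∈ s, alph δz l) - ∑ l ∈ s, b l := by
      rw [← Finset.sum_sub_distrib]
      exact Finset.sum_congr rfl fun l _ => hralph l
    rw [hsplit] at hβ''
    have h1 := (abs_le.1 hA).1
    have h2 := (abs_le.1 hA).2
    have h3 := (abs_le.1 hβ'').1
    have h4 := (abs_le.1 hβ'').2
    rw [abs_le]
    constructor <;> linarith
  · intro ψ lam hψ hl1 hl2 hU
    have hc : Complex.exp (Complex.I * lam) ≠ 0 := Complex.exp_ne_zero _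
    have hB := factB ε Δ δz L hε hε' hΔ hΔ' hδz hδz' hL hLδz lam hl1 hl2
    have hβ' := hβ ψ hψ
    rw [norm_weighted U ψ hψ _ hc hU s r] at hβ'
    rw [norm_weighted U ψ hψ _ hc hU s b]
    have hcl : ∀ l : ℤ, (Complex.exp (Complex.I * lam)) ^ l = Complex.exp (Complex.I * lam * l) := by
      intro l
      rw [show Complex.I * (lam:ℂ) * (l:ℂ) = (l:ℂ) * (Complex.I * lam) by ring,
        Complex.exp_int_mul]
    have hsplit : (∑ l ∈ s, ((b l:ℝ):ℂ) * (Complex.exp (Complex.I * lam)) ^ l)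
        = (∑ l ∈ s, fC δz lam l)
          - ∑ l ∈ s, ((r l:ℝ):ℂ) * (Complex.exp (Complex.I * lam)) ^ l := by
      rw [← Finset.sum_sub_distrib]
      refine Finset.sum_congr rfl fun l _ => ?_
      rw [hcl l]
      unfold fC
      rw [hralph l]
      push_cast
      ring
    rw [hsplit]
    calc ‖(∑ l ∈ s, fC δz lam l)
          - ∑ l ∈ s, ((r l:ℝ):ℂ) * (Complex.exp (Complex.I * lam)) ^ l‖
        ≤ ‖∑ l ∈ s, fC δz lam l‖
          + ‖∑ l ∈ s, ((r l:ℝ):ℂ) * (Complex.exp (Complex.I * lam)) ^ l‖ :=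
          norm_sub_le _ _
      _ ≤ 2 * ε := by linarith
end
end

section
/- Let 0 < ε ≤ 1/5, let c ≥ 1 be real, and let δz be a real number with 0 < δz ≤ π/√(log(c/ε)). Then ∑_{k∈ℤ, k≠0} exp(−(2πk/δz)²/2) ≤ 2ε²/(c² − ε²). -/
/-- tail estimate from the proof of Lemma 1:
for `0 < ε ≤ 1/5`, `c ≥ 1`, and `0 < δz ≤ π/√(log(c/ε))`,
`∑_{k≠0} exp(−(2πk/δz)²/2) ≤ 2ε²/(c² − ε²)`. -/
theorem stmt_7 (ε c δz : ℝ) (hε : 0 < ε) (hε' : ε ≤ 1 / 5) (hc : 1 ≤ c)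
    (hδz : 0 < δz) (hδz' : δz ≤ Real.pi / Real.sqrt (Real.log (c / ε))) :
    (∑' k : {k : ℤ // k ≠ 0}, Real.exp (-(2 * Real.pi * ((k : ℤ) : ℝ) / δz) ^ 2 / 2)) ≤
      2 * ε ^ 2 / (c ^ 2 - ε ^ 2) := by
  set L : ℝ := Real.log (c / ε) with hLdef
  have hεc : ε < c := lt_of_le_of_lt hε' (by linarith)
  have hc0 : (0:ℝ) < c := by linarith
  have hL : 0 < L := Real.log_pos (by rw [lt_div_iff₀ hε]; linarith)
  -- δz² bound
  have hsq : Real.sqrt L > 0 := Real.sqrt_pos.mpr hL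
  have hδ2 : L * δz ^ 2 ≤ Real.pi ^ 2 := by
    have h1 : δz ^ 2 ≤ (Real.pi / Real.sqrt L) ^ 2 := by
      apply pow_le_pow_left₀ hδz.le hδz'
    have h2 : (Real.pi / Real.sqrt L) ^ 2 = Real.pi ^ 2 / L := by
      rw [div_pow, Real.sq_sqrt hL.le]
    rw [h2] at h1
    calc L * δz ^ 2 ≤ L * (Real.pi ^ 2 / L) := by
          exact mul_le_mul_of_nonneg_left h1 hL.le
      _ = Real.pi ^ 2 := by field_simp
  -- the geometric ratio
  set q : ℝ := (ε / c) ^ 2 with hqdef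
  have hr0 : 0 < ε / c := div_pos hε hc0
  have hr1 : ε / c < 1 := (div_lt_one hc0).mpr hεc
  have hq0 : 0 ≤ q := sq_nonneg _
  have hq1 : q < 1 := pow_lt_one₀ hr0.le hr1 two_ne_zero
  -- q = exp (-2L)
  have hlog : Real.log (ε / c) = -L := by
    rw [hLdef, ← Real.log_inv, inv_div]
  have hqexp : q = Real.exp (-(2 * L)) := by
    rw [hqdef, ← Real.exp_log hr0, hlog, ← Real.exp_nat_mul]
    norm_num
  -- bounding function on ℤ
  set g : ℤ → ℝ := fun k => q ^ k.natAbs with hgdef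
  -- termwise bound
  have hbound : ∀ k : ℤ, k ≠ 0 →
      Real.exp (-(2 * Real.pi * (k : ℝ) / δz) ^ 2 / 2) ≤ g k := by
    intro k hk
    have hn1 : (1:ℝ) ≤ (k.natAbs : ℝ) := by
      have : 1 ≤ k.natAbs := Nat.one_le_iff_ne_zero.mpr (Int.natAbs_ne_zero.mpr hk)
      exact_mod_cast this
    have hksq : ((k.natAbs : ℝ)) ^ 2 = (k : ℝ) ^ 2 := by
      rw [Nat.cast_natAbs]
      push_cast
      rw [sq_abs]
    have hn2 : (k.natAbs : ℝ) ≤ (k : ℝ) ^ 2 := by nlinarith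
    have hgk : g k = Real.exp ((k.natAbs : ℝ) * (-(2 * L))) := by
      rw [hgdef]; simp only [hqexp, ← Real.exp_nat_mul]
    rw [hgk, Real.exp_le_exp]
    rw [div_le_iff₀ (by norm_num : (0:ℝ) < 2)] at *
    have ht : (2 * Real.pi * (k : ℝ) / δz) ^ 2 * δz ^ 2 = 4 * Real.pi ^ 2 * (k : ℝ) ^ 2 := by
      field_simp; ring
    have hpi := Real.pi_pos
    nlinarith [sq_nonneg ((k:ℝ)), sq_nonneg δz, mul_pos hδz hδz,
      mul_le_mul_of_nonneg_right hδ2 (sq_nonneg ((k:ℝ))),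
      mul_le_mul_of_nonneg_right hn2 (mul_pos hL (mul_pos hδz hδz)).le]
  -- summability and sum of g over ℤ
  have h1 : HasSum (fun n : ℕ => q ^ n) (1 - q)⁻¹ := hasSum_geometric_of_lt_one hq0 hq1
  have h2 : HasSum (fun n : ℕ => q ^ (n + 1)) (q * (1 - q)⁻¹) := by
    simpa [pow_succ, mul_comm] using h1.mul_left q
  have hG : HasSum g ((1 - q)⁻¹ + q * (1 - q)⁻¹) := by
    have heq : g = Int.rec (fun n : ℕ => q ^ n) (fun n : ℕ => q ^ (n + 1)) := by
      funext k
      cases k with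
      | ofNat n => rfl
      | negSucc n => rfl
    rw [heq]
    exact h1.int_rec h2
  have hGsumm : Summable g := hG.summable
  -- sum of g over nonzero integers
  have hsplit : (∑' k : ↥(({0} : Set ℤ)ᶜ), g (k : ℤ)) = ((1 - q)⁻¹ + q * (1 - q)⁻¹) - 1 := by
    have hs : Summable (g ∘ ((↑) : ({0} : Set ℤ) → ℤ)) := hGsumm.subtype _
    have hsc : Summable (g ∘ ((↑) : ↥(({0} : Set ℤ)ᶜ) → ℤ)) := hGsumm.subtype _
    have := Summable.tsum_add_tsum_compl (f := g) hs hsc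
    rw [tsum_singleton (0 : ℤ) g, hG.tsum_eq] at this
    have hg0 : g 0 = 1 := by simp [hgdef]
    rw [hg0] at this
    linarith [this]
  -- transfer to the subtype in the statement
  have hsc : Summable (g ∘ ((↑) : ↥(({0} : Set ℤ)ᶜ) → ℤ)) := hGsumm.subtype _
  let e : {k : ℤ // k ≠ 0} ≃ ↥(({0} : Set ℤ)ᶜ) :=
    Equiv.subtypeEquivRight (fun k => by simp)
  have hsc2 : Summable (fun k : {k : ℤ // k ≠ 0} => g k.1) := by
    have := e.summable_iff.mpr hsc
    exact this
  have hsplit2 : (∑' k : {k : ℤ // k ≠ 0}, g k.1) = ((1 - q)⁻¹ + q * (1 - q)⁻¹) - 1 := by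
    rw [← hsplit, ← Equiv.tsum_eq e (fun k => g (k : ℤ))]
    exact tsum_congr fun k => rfl
  have hlhs : Summable (fun k : {k : ℤ // k ≠ 0} =>
      Real.exp (-(2 * Real.pi * ((k : ℤ) : ℝ) / δz) ^ 2 / 2)) :=
    Summable.of_nonneg_of_le (fun k => (Real.exp_nonneg _)) (fun k => hbound k.1 k.2) hsc2
  calc (∑' k : {k : ℤ // k ≠ 0}, Real.exp (-(2 * Real.pi * ((k : ℤ) : ℝ) / δz) ^ 2 / 2))
      ≤ ∑' k : {k : ℤ // k ≠ 0}, g k.1 :=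
        Summable.tsum_le_tsum (fun k => hbound k.1 k.2) hlhs hsc2
    _ = ((1 - q)⁻¹ + q * (1 - q)⁻¹) - 1 := hsplit2
    _ = 2 * ε ^ 2 / (c ^ 2 - ε ^ 2) := by
        have h1q : (0:ℝ) < 1 - q := by linarith
        have hce : (0:ℝ) < c ^ 2 - ε ^ 2 := by nlinarith
        rw [hqdef]
        field_simp
        ring
end

section
/- Let P and W be bounded linear operators on a complex Hilbert space such that P is an orthogonal projection (P² = P and P† = P) and W is unitary. Define R := 2P − I and A := W R W† R W R W† R W. Then P A P = 5·(P W P) − 20·(P W P W† P W P) + 16·(P W P W† P W P W† P W P). -/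
open ContinuousLinearMap in
/-- Eq. (36): for an orthogonal projection `P` and a unitary `W` on a complex
Hilbert space, with `R := 2P − I` and `A := W R W† R W R W† R W`,
`P A P = 5 (PWP) − 20 (PWPW†PWP) + 16 (PWPW†PWPW†PWP)`. -/
theorem stmt_8 {K : Type*} [NormedAddCommGroup K] [InnerProductSpace ℂ K] [CompleteSpace K]
    (P W : K →L[ℂ] K)
    (hP2 : P * P = P) (hPsa : adjoint P = P)
    (hW1 : adjoint W * W = 1) (hW2 : W * adjoint W = 1) :
    P * (W * ((2 : ℂ) • P - 1) * adjoint W * ((2 : ℂ) • P - 1) * W * ((2 : ℂ) • P - 1) *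
        adjoint W * ((2 : ℂ) • P - 1) * W) * P =
      (5 : ℂ) • (P * W * P) -
        (20 : ℂ) • (P * W * P * adjoint W * P * W * P) +
        (16 : ℂ) • (P * W * P * adjoint W * P * W * P * adjoint W * P * W * P) := by
  set V := adjoint W with hV
  have hPP : ∀ x : K →L[ℂ] K, P * (P * x) = P * x := fun x => by
    rw [← mul_assoc, hP2]
  have hVW : ∀ x : K →L[ℂ] K, V * (W * x) = x := fun x => by
    rw [← mul_assoc, hW1, one_mul]
  have hWV : ∀ x : K →L[ℂ] K, W * (V * x) = x := fun x => by
    rw [← mul_assoc, hW2, one_mul]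
  simp only [mul_sub, sub_mul, mul_add, add_mul, smul_mul_assoc, mul_smul_comm, mul_one, one_mul,
    mul_assoc, hPP, hVW, hWV, hP2, hW1, hW2, smul_smul]
  module
end

section
/- Let H be a finite-dimensional complex inner product space, let N ≥ 1, and let U_1, …, U_N be unitary operators on H. Let β_1, …, β_N be complex numbers, not all zero, and set s := ∑_{j=1}^N |β_j|. Let γ_1, …, γ_N be complex numbers with |γ_j|² = |β_j| for all j, and let B be a unitary N×N complex matrix whose first column equals (γ_1, …, γ_N)/√s. Define the operator select := ∑_{j=1}^N E_{jj} ⊗ U_j on ℂ^N ⊗ H, where E_{jj} is the matrix unit, and define W := (B† ⊗ I)·select·(B ⊗ I). Then, with P := E_{11} ⊗ I, one has P W P = E_{11} ⊗ ((1/s) ∑_{j=1}^N |β_j| U_j). -/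
open scoped TensorProduct

set_option maxHeartbeats 1000000 in

private lemma tmap_sum_right {R M N P Q : Type*} [CommSemiring R]
    [AddCommMonoid M] [AddCommMonoid N] [AddCommMonoid P] [AddCommMonoid Q]
    [Module R M] [Module R N] [Module R P] [Module R Q]
    (f : M →ₗ[R] P) {ι : Type*} (t : Finset ι) (g : ι → (N →ₗ[R] Q)) :
    TensorProduct.map f (∑ j ∈ t, g j) = ∑ j ∈ t, TensorProduct.map f (g j) := by
  classical
  induction t using Finset.induction with
  | empty => simp [show TensorProduct.map f 0 = 0 by
      have := TensorProduct.map_smul_right (0 : R) f (0 : N →ₗ[R] Q); simpa using this]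
  | insert _ _ h ih => rw [Finset.sum_insert h, Finset.sum_insert h,
      TensorProduct.map_add_right, ih]

/-- LCU compression identity: conjugating `select := ∑_j E_{jj} ⊗ U_j` on
`ℂ^N ⊗ H` by the state-preparation unitary `B ⊗ I` (whose first column encodes `√(β_j/s)`)
and projecting the ancilla onto its first basis state realizes `(1/s) ∑_j |β_j| U_j`. -/
theorem stmt_11 {H : Type*} [NormedAddCommGroup H] [InnerProductSpace ℂ H]
    [FiniteDimensional ℂ H] (N : ℕ) (hN : 0 < N)
    (U : Fin N → (H ≃ₗᵢ[ℂ] H)) (β : Fin N → ℂ) (hβ : β ≠ 0)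
    (γ : Fin N → ℂ) (hγ : ∀ j, ‖γ j‖ ^ 2 = ‖β j‖)
    (B : Matrix (Fin N) (Fin N) ℂ) (hB : B ∈ Matrix.unitaryGroup (Fin N) ℂ)
    (hcol : ∀ j, B j ⟨0, hN⟩ =
      γ j / (Real.sqrt (∑ i, ‖β i‖) : ℂ))
    (select W P : (Fin N → ℂ) ⊗[ℂ] H →ₗ[ℂ] (Fin N → ℂ) ⊗[ℂ] H)
    (hselect : select = ∑ j, TensorProduct.map
      (Matrix.toLin' (Matrix.single j j 1)) (U j).toLinearEquiv.toLinearMap)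
    (hW : W = (TensorProduct.map (Matrix.toLin' (star B)) LinearMap.id) ∘ₗ select ∘ₗ
      (TensorProduct.map (Matrix.toLin' B) LinearMap.id))
    (hP : P = TensorProduct.map
      (Matrix.toLin' (Matrix.single ⟨0, hN⟩ ⟨0, hN⟩ 1)) LinearMap.id) :
    P ∘ₗ W ∘ₗ P = TensorProduct.map
      (Matrix.toLin' (Matrix.single ⟨0, hN⟩ ⟨0, hN⟩ 1))
      (((∑ i, ‖β i‖ : ℝ) : ℂ)⁻¹ •
        ∑ j, ((‖β j‖ : ℝ) : ℂ) • (U j).toLinearEquiv.toLinearMap) := by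
  classical
  subst hW hselect hP
  set z : Fin N := ⟨0, hN⟩
  set s : ℝ := ∑ i, ‖β i‖ with hs
  have hspos : 0 < s := by
    obtain ⟨j, hj⟩ : ∃ j, β j ≠ 0 := by
      by_contra h; push_neg at h; exact hβ (funext h)
    exact Finset.sum_pos' (fun i _ => norm_nonneg _)
      ⟨j, Finset.mem_univ j, norm_pos_iff.mpr hj⟩
  have hsne : (s : ℂ) ≠ 0 := by exact_mod_cast Complex.ofReal_ne_zero.mpr hspos.ne'
  -- key matrix identity
  have key : ∀ j, Matrix.single z z (1:ℂ) * star B *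
      (Matrix.single j j 1 * (B * Matrix.single z z 1)) =
      (((‖β j‖ : ℝ) : ℂ) / (s : ℂ)) • Matrix.single z z 1 := by
    intro j
    have hentry : (starRingEnd ℂ) (B j z) * B j z = ((‖β j‖ : ℝ) : ℂ) / s := by
      rw [hcol j]
      rw [map_div₀, Complex.conj_ofReal, div_mul_div_comm, ← Complex.normSq_eq_conj_mul_self,
        Complex.normSq_eq_norm_sq, hγ j, ← Complex.ofReal_mul, Real.mul_self_sqrt hspos.le]
    ext a b
    simp only [Matrix.mul_apply, Matrix.single, Matrix.of_apply, Matrix.star_apply,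
      Matrix.smul_apply, smul_eq_mul, ite_and]
    by_cases ha : a = z <;> by_cases hb : b = z <;>
      simp [ha, hb, Finset.sum_ite_eq, Finset.sum_ite_eq', Complex.star_def,
        mul_comm (B j z), hentry, eq_comm]
  -- abbreviations
  set f : (Fin N → ℂ) →ₗ[ℂ] (Fin N → ℂ) := Matrix.toLin' (Matrix.single z z 1)
  -- push sums out of compositions
  rw [LinearMap.comp_assoc, LinearMap.comp_assoc]
  simp only [← Module.End.mul_eq_comp, Finset.sum_mul, Finset.mul_sum]
  -- now both sides are sums over j; compare termwise
  rw [Finset.smul_sum]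
  have hmsum : TensorProduct.map f
      (∑ j, (((s : ℂ))⁻¹ • ((‖β j‖ : ℝ) : ℂ) • (U j).toLinearEquiv.toLinearMap)) =
      ∑ j, TensorProduct.map f
        ((((s : ℂ))⁻¹ • ((‖β j‖ : ℝ) : ℂ) • (U j).toLinearEquiv.toLinearMap)) :=
    tmap_sum_right f Finset.univ _
  rw [hmsum]
  refine Finset.sum_congr rfl fun j _ => ?_
  -- termwise identity
  simp only [Module.End.mul_eq_comp, ← LinearMap.comp_assoc]
  rw [← TensorProduct.map_comp, ← TensorProduct.map_comp, ← TensorProduct.map_comp,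
    ← TensorProduct.map_comp]
  simp only [LinearMap.comp_id, LinearMap.id_comp]
  rw [← Matrix.toLin'_mul, ← Matrix.toLin'_mul, ← Matrix.toLin'_mul, ← Matrix.toLin'_mul]
  have hassoc : Matrix.single z z (1:ℂ) * star B * Matrix.single j j 1 *
      B * Matrix.single z z 1 =
      Matrix.single z z (1:ℂ) * star B *
      (Matrix.single j j 1 * (B * Matrix.single z z 1)) := by
    simp only [mul_assoc]
  rw [hassoc, key j, map_smul, TensorProduct.map_smul_left, TensorProduct.map_smul_right,
    TensorProduct.map_smul_right, smul_smul, div_eq_inv_mul, mul_comm]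
end

section
/- There exists a universal constant C > 0 with the following property. Let H be a finite-dimensional complex inner product space, let M ≥ 1, and let e₀ be a fixed unit vector of ℂ^M. Let P := (e₀e₀†) ⊗ I be the orthogonal projection on ℂ^M ⊗ H determined by e₀, set R := 2P − I, and let W be a unitary operator on ℂ^M ⊗ H. Suppose there exist a linear operator R̃ on H and a real number s > 0 with P W P = (1/s)·(e₀e₀†) ⊗ R̃. Let R₀ be a unitary operator on H and let 0 < ε ≤ 1/10 satisfy ‖R̃ − R₀‖ ≤ ε and |s − 1/sin(π/10)| ≤ ε. Then, defining A := W R W† R W R W† R W, the operator norm of P A P − (e₀e₀†) ⊗ R₀ is at most C·ε. -/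
set_option maxHeartbeats 2000000

private lemma sin5_aux (x : ℝ) :
    Real.sin (5*x) = 16 * Real.sin x ^5 - 20 * Real.sin x ^3 + 5 * Real.sin x := by
  have h : (5:ℝ)*x = 3*x + 2*x := by ring
  rw [h, Real.sin_add, Real.sin_three_mul, Real.cos_three_mul, Real.sin_two_mul, Real.cos_two_mul]
  linear_combination (8*Real.sin x*(Real.cos x^2 + 1 - 2*Real.sin x^2)) * (Real.sin_sq_add_cos_sq x)

private lemma quint_aux :
    16 * Real.sin (Real.pi/10) ^5 - 20 * Real.sin (Real.pi/10) ^3 + 5 * Real.sin (Real.pi/10)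
      = 1 := by
  have := sin5_aux (Real.pi/10)
  rw [show (5:ℝ)*(Real.pi/10) = Real.pi/2 by ring, Real.sin_pi_div_two] at this
  linarith

open ContinuousLinearMap in
/-- correctness of two rounds of oblivious amplitude amplification,
Section IV.A.  The space `ℂ^M ⊗ H` together with the rank-one ancilla projector
`e₀e₀† ⊗ I` is encoded by a complex Hilbert space `K` together with an isometry
`J : H → K` (namely `x ↦ e₀ ⊗ x`, so that `J†J = I_H` and `P := JJ† = e₀e₀† ⊗ I`);
in this encoding `e₀e₀† ⊗ X = J X J†` for any operator `X` on `H`.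
If `P W P = (1/s)·J R̃ J†` with `‖R̃ − R₀‖ ≤ ε`, `R₀` unitary,
`|s − 1/sin(π/10)| ≤ ε` and `0 < ε ≤ 1/10`, then with `R := 2P − I` and
`A := W R W† R W R W† R W` one has `‖P A P − J R₀ J†‖ ≤ C·ε` for a universal constant `C`. -/
theorem stmt_12 :
    ∃ C : ℝ, 0 < C ∧
      ∀ (H : Type) [NormedAddCommGroup H] [InnerProductSpace ℂ H] [FiniteDimensional ℂ H]
        (K : Type) [NormedAddCommGroup K] [InnerProductSpace ℂ K] [CompleteSpace K]
        (J : H →L[ℂ] K) (W : K →L[ℂ] K) (Rt R₀ : H →L[ℂ] H) (s ε : ℝ)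
        (P R A : K →L[ℂ] K),
        adjoint J ∘L J = ContinuousLinearMap.id ℂ H →
        P = J ∘L adjoint J →
        adjoint W * W = 1 → W * adjoint W = 1 →
        0 < s →
        P * W * P = ((s : ℂ))⁻¹ • (J ∘L Rt ∘L adjoint J) →
        adjoint R₀ * R₀ = 1 → R₀ * adjoint R₀ = 1 →
        0 < ε → ε ≤ 1 / 10 →
        ‖Rt - R₀‖ ≤ ε →
        |s - 1 / Real.sin (Real.pi / 10)| ≤ ε →
        R = (2 : ℂ) • P - 1 →
        A = W * R * adjoint W * R * W * R * adjoint W * R * W →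
        ‖P * A * P - J ∘L R₀ ∘L adjoint J‖ ≤ C * ε := by
  refine ⟨10000, by norm_num, ?_⟩
  intro H _ _ _ K _ _ _ J W Rt R₀ s ε P R A hJ hP hW1 hW2 hs hPWP hR01 hR02 hε hε10 hRtR₀ hsσ
    hRdef hAdef
  subst hP hRdef hAdef
  -- pointwise consequences of the hypotheses
  have l1 : ∀ z, adjoint J (J z) = z := by
    intro z
    have := ContinuousLinearMap.ext_iff.mp hJ z
    simpa using this
  have l2 : ∀ z, adjoint W (W z) = z := by
    intro z
    have := ContinuousLinearMap.ext_iff.mp hW1 z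
    simpa using this
  have l3 : ∀ z, W (adjoint W z) = z := by
    intro z
    have := ContinuousLinearMap.ext_iff.mp hW2 z
    simpa using this
  set Q : H →L[ℂ] H := ((s : ℂ))⁻¹ • Rt with hQdef
  set Qa : H →L[ℂ] H := ((s : ℂ))⁻¹ • adjoint Rt with hQadef
  have l4 : ∀ z, adjoint J (W (J z)) = Q z := by
    intro z
    have h := ContinuousLinearMap.ext_iff.mp hPWP (J z)
    simp only [ContinuousLinearMap.mul_apply, ContinuousLinearMap.comp_apply,
      ContinuousLinearMap.smul_apply, l1] at h
    have h2 := congrArg (adjoint J) h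
    simp only [map_smul, l1] at h2
    simpa [hQdef] using h2
  have hop : adjoint J ∘L (W ∘L J) = Q := by
    ext z; simpa using l4 z
  have hQaadj : ContinuousLinearMap.adjoint Q = Qa := by
    rw [hQdef, hQadef, LinearIsometryEquiv.map_smulₛₗ ContinuousLinearMap.adjoint]
    norm_num
  have l5 : ∀ z, adjoint J (adjoint W (J z)) = Qa z := by
    intro z
    have h := congrArg ContinuousLinearMap.adjoint hop
    rw [adjoint_comp, adjoint_comp, adjoint_adjoint, hQaadj] at h
    have := ContinuousLinearMap.ext_iff.mp h z
    simpa using this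
  -- the key algebraic identity
  set N : H →L[ℂ] H :=
    (16:ℂ)•(Q * Qa * Q * Qa * Q) - (20:ℂ)•(Q * Qa * Q) + (5:ℂ)•Q with hNdef
  have key : (J ∘L adjoint J) * (W * ((2:ℂ)•(J ∘L adjoint J) - 1) * adjoint W *
      ((2:ℂ)•(J ∘L adjoint J) - 1) * W * ((2:ℂ)•(J ∘L adjoint J) - 1) * adjoint W *
      ((2:ℂ)•(J ∘L adjoint J) - 1) * W) * (J ∘L adjoint J)
      = J ∘L (N ∘L adjoint J) := by
    ext v
    simp only [hNdef, ContinuousLinearMap.mul_apply, ContinuousLinearMap.comp_apply,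
      ContinuousLinearMap.sub_apply, ContinuousLinearMap.add_apply,
      ContinuousLinearMap.smul_apply, ContinuousLinearMap.one_apply,
      map_sub, map_add, map_smul, l1, l2, l3, l4, l5]
    module
  -- basic norm facts
  have hmul : ∀ {x y : H →L[ℂ] H} {cx cy : ℝ}, ‖x‖ ≤ cx → ‖y‖ ≤ cy → ‖x*y‖ ≤ cx*cy := by
    intro x y cx cy hx hy
    exact le_trans (norm_mul_le _ _)
      (mul_le_mul hx hy (norm_nonneg _) (le_trans (norm_nonneg _) hx))
  have hR0 : ‖R₀‖ ≤ 1 := by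
    have h := ContinuousLinearMap.norm_adjoint_comp_self R₀
    rw [show adjoint R₀ ∘L R₀ = (1 : H →L[ℂ] H) from hR01] at h
    have h1 : ‖(1 : H →L[ℂ] H)‖ ≤ 1 := by
      rw [ContinuousLinearMap.one_def]; exact ContinuousLinearMap.norm_id_le
    nlinarith [norm_nonneg R₀]
  have hadjR0 : ‖adjoint R₀‖ ≤ 1 := by
    rw [LinearIsometryEquiv.norm_map ContinuousLinearMap.adjoint R₀]; exact hR0
  set σ : ℝ := Real.sin (Real.pi/10) with hσdef
  have hσpos : 0 < σ := Real.sin_pos_of_pos_of_lt_pi (by positivity)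
    (by nlinarith [Real.pi_pos])
  have hσ1 : σ ≤ 1 := Real.sin_le_one _
  have hσinv : 1 ≤ 1/σ := by rw [le_div_iff₀ hσpos]; linarith
  have h1 := abs_le.mp hsσ
  have hsbound : (9:ℝ)/10 ≤ s := by linarith [h1.1]
  have hsinv : s⁻¹ ≤ 2 := by
    rw [inv_le_comm₀ (by linarith) (by norm_num)]; linarith
  have hsinvpos : (0:ℝ) < s⁻¹ := by positivity
  have htσ : |s⁻¹ - σ| ≤ 2*ε := by
    have e1 : s⁻¹ - σ = σ * (1/σ - s) / s := by
      field_simp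
    have habs : |1/σ - s| ≤ ε := by rw [abs_sub_comm]; exact hsσ
    rw [e1, abs_div, abs_mul, abs_of_pos hσpos, abs_of_pos (by linarith : (0:ℝ) < s),
      div_le_iff₀ (by linarith : (0:ℝ) < s)]
    nlinarith [abs_nonneg (1/σ - s)]
  -- the approximate unitaries
  set U : H →L[ℂ] H := ((σ:ℝ):ℂ) • R₀ with hUdef
  set Ua : H →L[ℂ] H := ((σ:ℝ):ℂ) • adjoint R₀ with hUadef
  have hns : ∀ (c : ℂ) (x : H →L[ℂ] H), ‖c • x‖ = ‖c‖ * ‖x‖ := fun c x =>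
    norm_smul (α := ℂ) (β := H →L[ℂ] H) c x
  have hnσ : ‖((σ:ℝ):ℂ)‖ = σ := by
    rw [Complex.norm_real, Real.norm_eq_abs, abs_of_pos hσpos]
  have hnsinv : ‖((s:ℝ):ℂ)⁻¹‖ = s⁻¹ := by
    rw [norm_inv, Complex.norm_real, Real.norm_eq_abs, abs_of_pos hs]
  have hUb : ‖U‖ ≤ 1 := by
    rw [hUdef, hns, hnσ]; nlinarith [norm_nonneg R₀]
  have hUab : ‖Ua‖ ≤ 1 := by
    rw [hUadef, hns, hnσ]; nlinarith [norm_nonneg (adjoint R₀)]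
  have hQU : ‖Q - U‖ ≤ 4*ε := by
    have hsplitQ : Q - U = ((s:ℂ))⁻¹ • (Rt - R₀) + (((s:ℂ))⁻¹ - ((σ:ℝ):ℂ)) • R₀ := by
      rw [hQdef, hUdef]; module
    have hcast : ((s:ℂ))⁻¹ - ((σ:ℝ):ℂ) = (((s⁻¹ - σ : ℝ)):ℂ) := by push_cast; ring
    calc ‖Q - U‖ ≤ ‖((s:ℂ))⁻¹ • (Rt - R₀)‖ + ‖(((s:ℂ))⁻¹ - ((σ:ℝ):ℂ)) • R₀‖ := by
          rw [hsplitQ]; exact norm_add_le _ _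
      _ = s⁻¹ * ‖Rt - R₀‖ + |s⁻¹ - σ| * ‖R₀‖ := by
          rw [hns, hns, hnsinv, hcast, Complex.norm_real, Real.norm_eq_abs]
      _ ≤ 2*ε + 2*ε*1 := by
          have h2 := abs_nonneg (s⁻¹ - σ)
          have h3 := norm_nonneg (Rt - R₀)
          have h4 := norm_nonneg R₀
          nlinarith
      _ ≤ 4*ε := by linarith
  have hQaU : ‖Qa - Ua‖ ≤ 4*ε := by
    have hadj : Qa - Ua = ContinuousLinearMap.adjoint (Q - U) := by
      rw [map_sub, hQaadj, hUdef, hUadef,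
        LinearIsometryEquiv.map_smulₛₗ ContinuousLinearMap.adjoint]
      norm_num
    rw [hadj, LinearIsometryEquiv.norm_map]
    exact hQU
  have hQb : ‖Q‖ ≤ 2 := by
    calc ‖Q‖ = ‖(Q - U) + U‖ := by rw [sub_add_cancel]
      _ ≤ ‖Q - U‖ + ‖U‖ := norm_add_le _ _
      _ ≤ 2 := by linarith
  have hQab : ‖Qa‖ ≤ 2 := by
    calc ‖Qa‖ = ‖(Qa - Ua) + Ua‖ := by rw [sub_add_cancel]
      _ ≤ ‖Qa - Ua‖ + ‖Ua‖ := norm_add_le _ _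
      _ ≤ 2 := by linarith
  -- products of the unitaries
  have hRR3 : R₀ * adjoint R₀ * R₀ = R₀ := by rw [hR02, one_mul]
  have hRR5 : R₀ * adjoint R₀ * R₀ * adjoint R₀ * R₀ = R₀ := by
    rw [hR02, one_mul, hR02, one_mul]
  have hU3 : U * Ua * U = (((σ:ℝ):ℂ)^3) • R₀ := by
    rw [hUdef, hUadef]
    simp only [smul_mul_assoc, mul_smul_comm, smul_smul, hRR3]
    module
  have hU5 : U * Ua * U * Ua * U = (((σ:ℝ):ℂ)^5) • R₀ := by
    rw [hUdef, hUadef]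
    simp only [smul_mul_assoc, mul_smul_comm, smul_smul, hRR5]
    module
  -- telescoping bounds
  have hT3 : ‖Q * Qa * Q - U * Ua * U‖ ≤ 28*ε := by
    have hid : Q * Qa * Q - U * Ua * U
        = (Q-U)*(Qa*Q) + U*((Qa-Ua)*Q) + (U*Ua)*(Q-U) := by noncomm_ring
    rw [hid]
    have b1 : ‖(Q-U)*(Qa*Q)‖ ≤ (4*ε)*(2*2) := hmul hQU (hmul hQab hQb)
    have b2 : ‖U*((Qa-Ua)*Q)‖ ≤ 1*((4*ε)*2) := hmul hUb (hmul hQaU hQb)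
    have b3 : ‖(U*Ua)*(Q-U)‖ ≤ (1*1)*(4*ε) := hmul (hmul hUb hUab) hQU
    calc ‖(Q-U)*(Qa*Q) + U*((Qa-Ua)*Q) + (U*Ua)*(Q-U)‖
        ≤ ‖(Q-U)*(Qa*Q) + U*((Qa-Ua)*Q)‖ + ‖(U*Ua)*(Q-U)‖ := norm_add_le _ _
      _ ≤ ‖(Q-U)*(Qa*Q)‖ + ‖U*((Qa-Ua)*Q)‖ + ‖(U*Ua)*(Q-U)‖ := by
          linarith [norm_add_le ((Q-U)*(Qa*Q)) (U*((Qa-Ua)*Q))]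
      _ ≤ 28*ε := by linarith
  have hT5 : ‖Q * Qa * Q * Qa * Q - U * Ua * U * Ua * U‖ ≤ 124*ε := by
    have hid : Q * Qa * Q * Qa * Q - U * Ua * U * Ua * U
        = (Q-U)*(Qa*(Q*(Qa*Q))) + U*((Qa-Ua)*(Q*(Qa*Q))) + (U*Ua)*((Q-U)*(Qa*Q))
          + (U*(Ua*U))*((Qa-Ua)*Q) + (U*(Ua*(U*Ua)))*(Q-U) := by noncomm_ring
    rw [hid]
    have b1 : ‖(Q-U)*(Qa*(Q*(Qa*Q)))‖ ≤ (4*ε)*(2*(2*(2*2))) :=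
      hmul hQU (hmul hQab (hmul hQb (hmul hQab hQb)))
    have b2 : ‖U*((Qa-Ua)*(Q*(Qa*Q)))‖ ≤ 1*((4*ε)*(2*(2*2))) :=
      hmul hUb (hmul hQaU (hmul hQb (hmul hQab hQb)))
    have b3 : ‖(U*Ua)*((Q-U)*(Qa*Q))‖ ≤ (1*1)*((4*ε)*(2*2)) :=
      hmul (hmul hUb hUab) (hmul hQU (hmul hQab hQb))
    have b4 : ‖(U*(Ua*U))*((Qa-Ua)*Q)‖ ≤ (1*(1*1))*((4*ε)*2) :=
      hmul (hmul hUb (hmul hUab hUb)) (hmul hQaU hQb)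
    have b5 : ‖(U*(Ua*(U*Ua)))*(Q-U)‖ ≤ (1*(1*(1*1)))*(4*ε) :=
      hmul (hmul hUb (hmul hUab (hmul hUb hUab))) hQU
    set t1 := (Q-U)*(Qa*(Q*(Qa*Q)))
    set t2 := U*((Qa-Ua)*(Q*(Qa*Q)))
    set t3 := (U*Ua)*((Q-U)*(Qa*Q))
    set t4 := (U*(Ua*U))*((Qa-Ua)*Q)
    set t5 := (U*(Ua*(U*Ua)))*(Q-U)
    calc ‖t1 + t2 + t3 + t4 + t5‖
        ≤ ‖t1 + t2 + t3 + t4‖ + ‖t5‖ := norm_add_le _ _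
      _ ≤ ‖t1 + t2 + t3‖ + ‖t4‖ + ‖t5‖ := by linarith [norm_add_le (t1+t2+t3) t4]
      _ ≤ ‖t1 + t2‖ + ‖t3‖ + ‖t4‖ + ‖t5‖ := by linarith [norm_add_le (t1+t2) t3]
      _ ≤ ‖t1‖ + ‖t2‖ + ‖t3‖ + ‖t4‖ + ‖t5‖ := by linarith [norm_add_le t1 t2]
      _ ≤ 124*ε := by linarith
  -- the scalar identity
  have hcr : 16*σ^5 - 20*σ^3 + 5*σ = 1 := quint_aux
  have hc : (16:ℂ)*((σ:ℝ):ℂ)^5 - 20*((σ:ℝ):ℂ)^3 + 5*((σ:ℝ):ℂ) = 1 := by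
    exact_mod_cast congrArg (Complex.ofReal) hcr
  have hsplitN : N - R₀
      = (16:ℂ)•(Q*Qa*Q*Qa*Q - (((σ:ℝ):ℂ)^5)•R₀) - (20:ℂ)•(Q*Qa*Q - (((σ:ℝ):ℂ)^3)•R₀)
        + (5:ℂ)•(Q - ((σ:ℝ):ℂ)•R₀) := by
    have h1 : R₀ = ((16:ℂ)*((σ:ℝ):ℂ)^5 - 20*((σ:ℝ):ℂ)^3 + 5*((σ:ℝ):ℂ))•R₀ := by
      rw [hc, one_smul]
    rw [hNdef]
    nth_rewrite 1 [h1]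
    module
  have hNR : ‖N - R₀‖ ≤ 2564*ε := by
    rw [hsplitN, ← hU5, ← hU3, ← hUdef]
    have n16 : ‖(16:ℂ)•(Q*Qa*Q*Qa*Q - U*Ua*U*Ua*U)‖ ≤ 16*(124*ε) := by
      rw [hns]; simp only [Complex.norm_ofNat]
      nlinarith [norm_nonneg (Q*Qa*Q*Qa*Q - U*Ua*U*Ua*U)]
    have n20 : ‖(20:ℂ)•(Q*Qa*Q - U*Ua*U)‖ ≤ 20*(28*ε) := by
      rw [hns]; simp only [Complex.norm_ofNat]
      nlinarith [norm_nonneg (Q*Qa*Q - U*Ua*U)]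
    have n5 : ‖(5:ℂ)•(Q - U)‖ ≤ 5*(4*ε) := by
      rw [hns]; simp only [Complex.norm_ofNat]
      nlinarith [norm_nonneg (Q - U)]
    set a1 := (16:ℂ)•(Q*Qa*Q*Qa*Q - U*Ua*U*Ua*U)
    set a2 := (20:ℂ)•(Q*Qa*Q - U*Ua*U)
    set a3 := (5:ℂ)•(Q - U)
    calc ‖a1 - a2 + a3‖ ≤ ‖a1 - a2‖ + ‖a3‖ := norm_add_le _ _
      _ ≤ ‖a1‖ + ‖a2‖ + ‖a3‖ := by linarith [norm_sub_le a1 a2]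
      _ ≤ 2564*ε := by linarith
  -- assemble
  have hJn : ‖J‖ ≤ 1 := by
    have h := ContinuousLinearMap.norm_adjoint_comp_self J
    rw [hJ] at h
    have h1 : ‖ContinuousLinearMap.id ℂ H‖ ≤ 1 := ContinuousLinearMap.norm_id_le
    nlinarith [norm_nonneg J]
  have hJan : ‖adjoint J‖ ≤ 1 := by
    rw [LinearIsometryEquiv.norm_map ContinuousLinearMap.adjoint J]; exact hJn
  rw [key]
  have hfact : J ∘L (N ∘L adjoint J) - J ∘L R₀ ∘L adjoint J
      = J ∘L ((N - R₀) ∘L adjoint J) := by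
    ext v
    simp [ContinuousLinearMap.sub_apply, ContinuousLinearMap.comp_apply, map_sub]
  rw [hfact]
  calc ‖J ∘L ((N - R₀) ∘L adjoint J)‖ ≤ ‖J‖ * ‖(N - R₀) ∘L adjoint J‖ :=
        ContinuousLinearMap.opNorm_comp_le _ _
    _ ≤ ‖J‖ * (‖N - R₀‖ * ‖adjoint J‖) := by
        have := ContinuousLinearMap.opNorm_comp_le (N - R₀) (adjoint J)
        nlinarith [norm_nonneg J]
    _ ≤ 10000 * ε := by
        have h2 := norm_nonneg (N - R₀)
        have h3 := norm_nonneg (adjoint J)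
        have h5 : ‖N - R₀‖ * ‖adjoint J‖ ≤ (2564*ε) * 1 :=
          mul_le_mul hNR hJan h3 (by positivity)
        have h6 : ‖J‖ * (‖N - R₀‖ * ‖adjoint J‖) ≤ 1 * ((2564*ε)*1) :=
          mul_le_mul hJn h5 (by positivity) zero_le_one
        linarith
end

section
/- Let K be a complex inner product space, let W be a unitary operator on K, and let R be a linear operator on K. Let u, w ∈ K be orthonormal vectors with R u = u and R w = −w, and suppose W u = α u + β w for complex numbers α, β. Then ‖(W† R W + I) u‖ = 2|α|. -/
open scoped ComplexInnerProductSpace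

/-- quality of the PEA-based approximate reflection, Section III:
if `u, w` are orthonormal, `R u = u`, `R w = −w`, and the unitary `W` satisfies
`W u = α u + β w`, then `‖(W† R W + I) u‖ = 2|α|`. -/
theorem stmt_16 {K : Type*} [NormedAddCommGroup K] [InnerProductSpace ℂ K]
    (W : K ≃ₗᵢ[ℂ] K) (R : K →ₗ[ℂ] K) (u w : K) (α β : ℂ)
    (hu : ‖u‖ = 1) (hw : ‖w‖ = 1) (huw : ⟪u, w⟫ = 0)
    (hRu : R u = u) (hRw : R w = -w)
    (hWu : W u = α • u + β • w) :
    ‖W.symm (R (W u)) + u‖ = 2 * ‖α‖ := by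
  have h1 : R (W u) = α • u - β • w := by
    rw [hWu, map_add, map_smul, map_smul, hRu, hRw, smul_neg, sub_eq_add_neg]
  have h2 : u = α • W.symm u + β • W.symm w := by
    conv_lhs => rw [← W.symm_apply_apply u, hWu]
    rw [map_add, map_smul, map_smul]
  have h3 : W.symm (R (W u)) + u = (2 * α) • W.symm u := by
    rw [h1, map_sub, map_smul, map_smul]
    nth_rewrite 2 [h2]
    module
  rw [h3, norm_smul, W.symm.norm_map, hu, mul_one, norm_mul]
  norm_num
end

section
/- Let L ≥ 1 be an integer and δz > 0 a real number. For each integer l define the periodized Gaussians c_l := ∑_{k∈ℤ} exp(−π²(l + 2kL)²/(L²·δz²)) and d_l := ∑_{k∈ℤ} exp(−((l + 2kL)·δz)²/4) (both series converge absolutely, and c_l, d_l depend only on l modulo 2L). Then for every integer j, d_j = (√π/(L·δz)) · ∑_{l=−L}^{L−1} e^{iπjl/L} · c_l. -/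
open Complex Real

lemma summable_gauss (c t s : ℝ) (hc : 0 < c) (hs : s ≠ 0) :
    Summable fun k : ℤ => Real.exp (-(c * (t + k * s) ^ 2)) := by
  set τ : ℂ := ((c * s ^ 2 / Real.pi : ℝ) : ℂ) * Complex.I with hτdef
  set z : ℂ := ((c * t * s / Real.pi : ℝ) : ℂ) * Complex.I with hzdef
  have hτi : τ.im = c * s ^ 2 / Real.pi := by rw [Complex.mul_I_im, Complex.ofReal_re]
  have hzi : z.im = c * t * s / Real.pi := by rw [Complex.mul_I_im, Complex.ofReal_re]
  have hτ : 0 < τ.im := by rw [hτi]; positivity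
  have h1 : Summable fun n : ℤ => jacobiTheta₂_term n z τ :=
    (summable_jacobiTheta₂_term_iff z τ).mpr hτ
  have h2 : Summable fun n : ℤ => ‖jacobiTheta₂_term n z τ‖ := summable_norm_iff.mpr h1
  have h3 : (fun n : ℤ => ‖jacobiTheta₂_term n z τ‖) =
      fun n : ℤ => Real.exp (c * t ^ 2) * Real.exp (-(c * (t + n * s) ^ 2)) := by
    funext n
    rw [norm_jacobiTheta₂_term, ← Real.exp_add, hτi, hzi]
    congr 1
    have hπ : Real.pi ≠ 0 := Real.pi_ne_zero
    field_simp
    ring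
  rw [h3] at h2
  exact (summable_mul_left_iff (Real.exp_ne_zero _)).mp h2

def foldEquiv (L : ℤ) (hL : 1 ≤ L) : (Finset.Icc (-L) (L - 1) : Finset ℤ) × ℤ ≃ ℤ where
  toFun p := (p.1 : ℤ) + 2 * p.2 * L
  invFun m := (⟨(m + L) % (2 * L) - L, by
      have hne : (2 * L) ≠ 0 := by omega
      have h1 := Int.emod_nonneg (m + L) hne
      have h2 := Int.emod_lt_of_pos (m + L) (by omega : 0 < 2 * L)
      simp only [Finset.mem_Icc]
      omega⟩, (m + L) / (2 * L))
  left_inv := by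
    rintro ⟨⟨l, hl⟩, k⟩
    simp only [Finset.mem_Icc] at hl
    have hne : (2 * L) ≠ 0 := by omega
    have e1 : l + 2 * k * L + L = (l + L) + 2 * L * k := by ring
    have h1 : (l + 2 * k * L + L) % (2 * L) = l + L := by
      rw [e1, Int.add_mul_emod_self_left, Int.emod_eq_of_lt (by omega) (by omega)]
    have h2 : (l + 2 * k * L + L) / (2 * L) = k := by
      rw [e1, Int.add_mul_ediv_left _ _ hne, Int.ediv_eq_zero_of_lt (by omega) (by omega),
        zero_add]
    ext
    · simp [h1]
    · simp [h2]
  right_inv := by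
    intro m
    have := Int.mul_ediv_add_emod (m + L) (2 * L)
    simp only
    linear_combination this

/-- discrete Fourier duality of periodized Gaussians, Appendix B:
with `c_l := ∑_{k∈ℤ} exp(−π²(l+2kL)²/(L²δz²))` and `d_l := ∑_{k∈ℤ} exp(−((l+2kL)δz)²/4)`
(both series converge absolutely), for every integer `j`,
`d_j = (√π/(L·δz)) ∑_{l=−L}^{L−1} e^{iπjl/L} c_l`. -/
theorem stmt_18 (L : ℤ) (hL : 1 ≤ L) (δz : ℝ) (hδz : 0 < δz) :
    (∀ l : ℤ, Summable fun k : ℤ =>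
      Real.exp (-(Real.pi ^ 2 * ((l : ℝ) + 2 * k * L) ^ 2) / ((L : ℝ) ^ 2 * δz ^ 2))) ∧
    (∀ l : ℤ, Summable fun k : ℤ =>
      Real.exp (-(((l : ℝ) + 2 * k * L) * δz) ^ 2 / 4)) ∧
    ∀ j : ℤ,
      ((∑' k : ℤ, Real.exp (-(((j : ℝ) + 2 * k * L) * δz) ^ 2 / 4) : ℝ) : ℂ) =
        ((Real.sqrt Real.pi / ((L : ℝ) * δz) : ℝ) : ℂ) *
          ∑ l ∈ Finset.Icc (-L) (L - 1),
            Complex.exp ((Real.pi : ℂ) * Complex.I * (j : ℂ) * (l : ℂ) / (L : ℂ)) *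
              ((∑' k : ℤ, Real.exp
                (-(Real.pi ^ 2 * ((l : ℝ) + 2 * k * L) ^ 2) / ((L : ℝ) ^ 2 * δz ^ 2)) : ℝ) : ℂ) := by
  have hL0 : (0 : ℝ) < (L : ℝ) := by exact_mod_cast hL
  have hLne : (L : ℝ) ≠ 0 := ne_of_gt hL0
  have hδne : δz ≠ 0 := ne_of_gt hδz
  have hπ : (0 : ℝ) < Real.pi := Real.pi_pos
  have hsum1 : ∀ l : ℤ, Summable fun k : ℤ =>
      Real.exp (-(Real.pi ^ 2 * ((l : ℝ) + 2 * k * L) ^ 2) / ((L : ℝ) ^ 2 * δz ^ 2)) := by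
    intro l
    refine (summable_gauss (Real.pi ^ 2 / ((L : ℝ) ^ 2 * δz ^ 2)) (l : ℝ) (2 * L)
      (by positivity) (by positivity)).congr fun k => ?_
    congr 1
    field_simp
  have hsum2 : ∀ l : ℤ, Summable fun k : ℤ =>
      Real.exp (-(((l : ℝ) + 2 * k * L) * δz) ^ 2 / 4) := by
    intro l
    refine (summable_gauss (δz ^ 2 / 4) (l : ℝ) (2 * L)
      (by positivity) (by positivity)).congr fun k => ?_
    congr 1
    field_simp
  refine ⟨hsum1, hsum2, fun j => ?_⟩
  -- setup for Poisson
  set a : ℝ := Real.pi / ((L : ℝ) ^ 2 * δz ^ 2) with ha_def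
  have ha : 0 < a := by positivity
  set b : ℂ := Complex.I * (j : ℂ) / (2 * (L : ℂ)) with hb_def
  have hLC : (L : ℂ) ≠ 0 := by exact_mod_cast hLne
  have hδC : (δz : ℂ) ≠ 0 := by exact_mod_cast hδne
  have hπC : (Real.pi : ℂ) ≠ 0 := by exact_mod_cast hπ.ne'
  have key := Complex.tsum_exp_neg_quadratic (a := (a : ℂ))
    (by rw [Complex.ofReal_re]; exact ha) b
  -- Claim A : RHS of key equals d_j
  have claimA : (∑' n : ℤ, Complex.exp (-(Real.pi : ℂ) / (a : ℂ) * ((n : ℂ) + Complex.I * b) ^ 2)) =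
      ((∑' k : ℤ, Real.exp (-(((j : ℝ) + 2 * k * L) * δz) ^ 2 / 4) : ℝ) : ℂ) := by
    have h1 : ∀ n : ℤ, Complex.exp (-(Real.pi : ℂ) / (a : ℂ) * ((n : ℂ) + Complex.I * b) ^ 2) =
        ((Real.exp (-(((j : ℝ) + 2 * (-(n : ℝ)) * L) * δz) ^ 2 / 4) : ℝ) : ℂ) := by
      intro n
      rw [Complex.ofReal_exp]
      congr 1
      rw [ha_def, hb_def]
      push_cast
      have : Complex.I * (Complex.I * (j : ℂ) / (2 * (L : ℂ))) = -((j : ℂ) / (2 * (L : ℂ))) := by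
        field_simp
        rw [Complex.I_sq]
        ring
      rw [this]
      field_simp
      ring
    rw [tsum_congr h1, ← Complex.ofReal_tsum, Complex.ofReal_inj]
    have h2 := (Equiv.neg ℤ).tsum_eq
      (fun k : ℤ => Real.exp (-(((j : ℝ) + 2 * (k : ℝ) * L) * δz) ^ 2 / 4))
    simp only [Equiv.neg_apply, Int.cast_neg] at h2
    exact h2
  -- F and its summability
  set F : ℤ → ℂ := fun m =>
    Complex.exp (-(Real.pi : ℂ) * (a : ℂ) * (m : ℂ) ^ 2 + 2 * (Real.pi : ℂ) * b * (m : ℂ))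
    with hF_def
  have hFnorm : ∀ m : ℤ, ‖F m‖ = Real.exp (-(Real.pi * a * ((0 : ℝ) + (m : ℝ) * 1) ^ 2)) := by
    intro m
    have he : -(Real.pi : ℂ) * (a : ℂ) * (m : ℂ) ^ 2 + 2 * (Real.pi : ℂ) * b * (m : ℂ) =
        Complex.ofReal (-(Real.pi * a * ((0 : ℝ) + (m : ℝ) * 1) ^ 2)) +
          Complex.ofReal (Real.pi * (j : ℝ) * (m : ℝ) / (L : ℝ)) * Complex.I := by
      rw [hb_def]
      push_cast
      field_simp
      ring
    rw [hF_def]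
    simp only []
    rw [he, Complex.exp_add, norm_mul,
      Complex.norm_exp_ofReal, Complex.norm_exp_ofReal_mul_I, mul_one]
  have hFsum : Summable F := by
    apply Summable.of_norm
    simp only [hFnorm]
    exact summable_gauss (Real.pi * a) 0 1 (by positivity) one_ne_zero
  -- per-term identity
  have hterm : ∀ (l k : ℤ), F (l + 2 * k * L) =
      Complex.exp ((Real.pi : ℂ) * Complex.I * (j : ℂ) * (l : ℂ) / (L : ℂ)) *
        ((Real.exp (-(Real.pi ^ 2 * ((l : ℝ) + 2 * k * L) ^ 2) / ((L : ℝ) ^ 2 * δz ^ 2)) : ℝ) : ℂ) := by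
    intro l k
    rw [hF_def]
    simp only []
    rw [Complex.ofReal_exp, ← Complex.exp_add]
    have he : -(Real.pi : ℂ) * (a : ℂ) * (((l + 2 * k * L : ℤ) : ℤ) : ℂ) ^ 2 +
        2 * (Real.pi : ℂ) * b * (((l + 2 * k * L : ℤ) : ℤ) : ℂ) =
        ((Real.pi : ℂ) * Complex.I * (j : ℂ) * (l : ℂ) / (L : ℂ) +
          ((-(Real.pi ^ 2 * ((l : ℝ) + 2 * k * L) ^ 2) / ((L : ℝ) ^ 2 * δz ^ 2) : ℝ) : ℂ)) +
          ((j * k : ℤ) : ℂ) * (2 * (Real.pi : ℂ) * Complex.I) := by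
      rw [ha_def, hb_def]
      push_cast
      field_simp
      ring
    rw [he, Complex.exp_add, Complex.exp_int_mul_two_pi_mul_I, mul_one]
  -- Claim B : folding the sum
  have claimB : (∑ l ∈ Finset.Icc (-L) (L - 1),
      Complex.exp ((Real.pi : ℂ) * Complex.I * (j : ℂ) * (l : ℂ) / (L : ℂ)) *
        ((∑' k : ℤ, Real.exp
          (-(Real.pi ^ 2 * ((l : ℝ) + 2 * k * L) ^ 2) / ((L : ℝ) ^ 2 * δz ^ 2)) : ℝ) : ℂ)) =
      ∑' m : ℤ, F m := by
    have e := foldEquiv L hL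
    have hslice : ∀ l : (Finset.Icc (-L) (L - 1) : Finset ℤ),
        Summable fun k : ℤ => F ((l : ℤ) + 2 * k * L) := by
      intro l
      have : Summable fun k : ℤ =>
          Complex.exp ((Real.pi : ℂ) * Complex.I * (j : ℂ) * ((l : ℤ) : ℂ) / (L : ℂ)) *
            ((Real.exp (-(Real.pi ^ 2 * (((l : ℤ) : ℝ) + 2 * k * L) ^ 2) /
              ((L : ℝ) ^ 2 * δz ^ 2)) : ℝ) : ℂ) :=
        (Complex.summable_ofReal.mpr (hsum1 (l : ℤ))).mul_left _
      exact this.congr fun k => (hterm (l : ℤ) k).symm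
    calc ∑ l ∈ Finset.Icc (-L) (L - 1),
        Complex.exp ((Real.pi : ℂ) * Complex.I * (j : ℂ) * (l : ℂ) / (L : ℂ)) *
          ((∑' k : ℤ, Real.exp
            (-(Real.pi ^ 2 * ((l : ℝ) + 2 * k * L) ^ 2) / ((L : ℝ) ^ 2 * δz ^ 2)) : ℝ) : ℂ)
        = ∑' l : (Finset.Icc (-L) (L - 1) : Finset ℤ),
            Complex.exp ((Real.pi : ℂ) * Complex.I * (j : ℂ) * ((l : ℤ) : ℂ) / (L : ℂ)) *
              ((∑' k : ℤ, Real.exp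
                (-(Real.pi ^ 2 * (((l : ℤ) : ℝ) + 2 * k * L) ^ 2) /
                  ((L : ℝ) ^ 2 * δz ^ 2)) : ℝ) : ℂ) := by
          exact (Finset.tsum_subtype _ _).symm
      _ = ∑' l : (Finset.Icc (-L) (L - 1) : Finset ℤ), ∑' k : ℤ, F ((l : ℤ) + 2 * k * L) := by
          refine tsum_congr fun l => ?_
          rw [Complex.ofReal_tsum, ← tsum_mul_left]
          exact tsum_congr fun k => (hterm (l : ℤ) k).symm
      _ = ∑' p : (Finset.Icc (-L) (L - 1) : Finset ℤ) × ℤ, F ((foldEquiv L hL) p) := by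
          exact (Summable.tsum_prod' ((foldEquiv L hL).summable_iff.mpr hFsum) hslice).symm
      _ = ∑' m : ℤ, F m := (foldEquiv L hL).tsum_eq F
  -- coefficient computation
  have hcoef : ((Real.sqrt Real.pi / ((L : ℝ) * δz) : ℝ) : ℂ) * (1 / (a : ℂ) ^ (1 / 2 : ℂ)) = 1 := by
    have h12 : ((1 / 2 : ℝ) : ℂ) = (1 / 2 : ℂ) := by norm_num
    rw [← h12, ← Complex.ofReal_cpow ha.le]
    have hsq : a ^ (1 / 2 : ℝ) = Real.sqrt Real.pi / ((L : ℝ) * δz) := by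
      rw [← Real.sqrt_eq_rpow, ha_def]
      have : (L : ℝ) ^ 2 * δz ^ 2 = ((L : ℝ) * δz) ^ 2 := by ring
      rw [this, Real.sqrt_div hπ.le, Real.sqrt_sq (by positivity)]
    rw [hsq]
    have hne : Real.sqrt Real.pi / ((L : ℝ) * δz) ≠ 0 := by
      apply div_ne_zero
      · exact (Real.sqrt_pos.mpr hπ).ne'
      · positivity
    rw [mul_one_div, div_self (by exact_mod_cast hne)]
  -- assemble
  have key' : (∑' m : ℤ, F m) =
      1 / (a : ℂ) ^ (1 / 2 : ℂ) *
        ∑' n : ℤ, Complex.exp (-(Real.pi : ℂ) / (a : ℂ) * ((n : ℂ) + Complex.I * b) ^ 2) := key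
  rw [claimB, key', claimA, ← mul_assoc, hcoef, one_mul]
end

section
/- Let 0 < ε ≤ 1/5 and let T be a real number with T² ≥ 4·log(1/ε). Then 1 ≤ ∑_{l∈ℤ} exp(−(l·T)²/2) ≤ 1 + 3ε². -/
/-- normalization estimate, Appendix B, Eq. (B13): for `0 < ε ≤ 1/5` and
`T² ≥ 4 log(1/ε)`, `1 ≤ ∑_{l∈ℤ} exp(−(lT)²/2) ≤ 1 + 3ε²`. -/
theorem stmt_19 (ε T : ℝ) (hε : 0 < ε) (hε' : ε ≤ 1 / 5)
    (hT : 4 * Real.log (1 / ε) ≤ T ^ 2) :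
    1 ≤ (∑' l : ℤ, Real.exp (-((l : ℝ) * T) ^ 2 / 2)) ∧
      (∑' l : ℤ, Real.exp (-((l : ℝ) * T) ^ 2 / 2)) ≤ 1 + 3 * ε ^ 2 := by
  set r : ℝ := Real.exp (-(T ^ 2) / 2) with hr
  have hr0 : 0 < r := Real.exp_pos _
  have hrε : r ≤ ε ^ 2 := by
    have hlog : Real.log (1 / ε) = -Real.log ε := by rw [one_div, Real.log_inv]
    have h1 : -(T ^ 2) / 2 ≤ Real.log ε + Real.log ε := by
      rw [hlog] at hT; linarith
    calc r ≤ Real.exp (Real.log ε + Real.log ε) := Real.exp_le_exp.mpr h1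
      _ = ε ^ 2 := by rw [Real.exp_add, Real.exp_log hε]; ring
  have hε225 : ε ^ 2 ≤ 1 / 25 := by nlinarith
  have hr1 : r < 1 := lt_of_le_of_lt (hrε.trans hε225) (by norm_num)
  set g : ℕ → ℝ := fun n => Real.exp (-(((n : ℝ) + 1) * T) ^ 2 / 2) with hg
  have hterm : ∀ n : ℕ, g n ≤ r ^ (n + 1) := by
    intro n
    have h2 : -((((n : ℝ) + 1) * T) ^ 2) / 2 ≤ ((n : ℕ) + 1 : ℕ) * (-(T ^ 2) / 2) := by
      push_cast
      nlinarith [sq_nonneg T, Nat.cast_nonneg (α := ℝ) n]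
    calc g n ≤ Real.exp ((((n : ℕ) + 1 : ℕ) : ℝ) * (-(T ^ 2) / 2)) := Real.exp_le_exp.mpr h2
      _ = r ^ (n + 1) := by rw [Real.exp_nat_mul]
  have hgeom : Summable (fun n : ℕ => r ^ (n + 1)) := by
    have := (summable_geometric_of_lt_one hr0.le hr1).mul_left r
    refine this.congr fun n => ?_
    ring
  have hgsum : Summable g :=
    Summable.of_nonneg_of_le (fun n => (Real.exp_pos _).le) hterm hgeom
  set B : ℝ := ∑' n : ℕ, g n with hB
  have hBnn : 0 ≤ B := tsum_nonneg fun n => (Real.exp_pos _).le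
  have hBle : B ≤ r * (1 - r)⁻¹ := by
    calc B ≤ ∑' n : ℕ, r ^ (n + 1) := Summable.tsum_le_tsum hterm hgsum hgeom
      _ = r * ∑' n : ℕ, r ^ n := by
          rw [← tsum_mul_left]; exact tsum_congr fun n => by ring
      _ = r * (1 - r)⁻¹ := by rw [tsum_geometric_of_lt_one hr0.le hr1]
  set f : ℤ → ℝ := fun l => Real.exp (-((l : ℝ) * T) ^ 2 / 2) with hf
  have hFnat : HasSum (fun n : ℕ => f n) (B + 1) := by
    have h1 : HasSum (fun n : ℕ => f ((n : ℕ) + 1)) B := by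
      have heq : (fun n : ℕ => f ((n : ℕ) + 1)) = g := by
        funext n
        simp only [hf, hg]
        congr 1
        push_cast
        ring
      rw [heq]
      exact hgsum.hasSum
    have := (hasSum_nat_add_iff (f := fun n : ℕ => f n) 1).mp h1
    simpa [hf] using this
  have hFneg : HasSum (fun n : ℕ => f (-((n : ℕ) + 1))) B := by
    have heq : (fun n : ℕ => f (-((n : ℕ) + 1))) = g := by
      funext n
      simp only [hf, hg]
      congr 1
      push_cast
      ring
    rw [heq]
    exact hgsum.hasSum
  have hsum : HasSum f (B + 1 + B) := hFnat.of_nat_of_neg_add_one hFneg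
  have htsum : (∑' l : ℤ, f l) = B + 1 + B := hsum.tsum_eq
  constructor
  · rw [htsum]; linarith
  · rw [htsum]
    have h1r : (24:ℝ)/25 ≤ 1 - r := by
      have : r ≤ 1/25 := hrε.trans hε225
      linarith
    have hBle2 : B ≤ (25/24) * ε ^ 2 := by
      have hpos : (0:ℝ) < 1 - r := by linarith
      have : r * (1 - r)⁻¹ ≤ (25/24) * ε ^ 2 := by
        rw [mul_inv_le_iff₀ hpos]
        nlinarith [sq_nonneg ε]
      linarith [hBle]
    nlinarith [sq_nonneg ε]
end
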